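/- Admissible substitution principle for sorts: in a well-formed generalized algebraic theory 𝕋, if ψ is a well-formed substitution from telescope Φ to telescope Ψ (Φ ⊢ ψ : Ψ) and A is a well-formed sort in context Ψ (Ψ ⊢ A sort), then A[ψ] is a well-formed sort in context Φ (Φ ⊢ A[ψ] sort). -/

import Mathlib

-- Raw syntax of generalized algebraic theories: terms are variables or operator
-- applications `ϑ⟦ψ⟧`, substitutions are lists of term/variable assignments.
mutual
inductive Tm : Type
  | var : ℕ → Tm
  | op : ℕ → Subst → Tm
inductive Subst : Type
  | nil : Subst
  | snoc : Subst → Tm → ℕ → Subst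
end

-- Raw sorts: `A = ϑ⟦ψ⟧` for a sort symbol `ϑ`.
inductive Srt : Type
  | cut : ℕ → Subst → Srt

-- Substitution action and composition, by mutual structural recursion.
mutual
def Tm.subst : Tm → Subst → Tm
  | .var x, .nil => .var x
  | .var x, .snoc ψ M y => if y = x then M else Tm.subst (.var x) ψ
  | .op ϑ φ, ψ => .op ϑ (Subst.comp φ ψ)
def Subst.comp : Subst → Subst → Subst
  | .nil, _ => .nil
  | .snoc φ N x, ψ => .snoc (Subst.comp φ ψ) (Tm.subst N ψ) x
end

def Srt.subst : Srt → Subst → Srt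
  | .cut ϑ φ, ψ => .cut ϑ (Subst.comp φ ψ)

-- Telescopes: lists of (variable, sort) declarations (most recent first).
abbrev Tele := List (ℕ × Srt)

-- Theory entries: sort declarations, operation declarations, sort axioms, term axioms.
inductive Entry : Type
  | sortDecl (ϑ : ℕ) (Ψ : Tele)
  | opDecl (ϑ : ℕ) (Ψ : Tele) (A : Srt)
  | sortAx (Ψ : Tele) (A B : Srt)
  | termAx (Ψ : Tele) (M N : Tm) (A : Srt)

-- A theory is a list of entries (most recent first).
abbrev Thy := List Entry

def Entry.name : Entry → Option ℕ
  | .sortDecl ϑ _ => some ϑ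
  | .opDecl ϑ _ _ => some ϑ
  | _ => none

-- The mutually inductive judgments of a generalized algebraic theory:
-- well-formed telescopes, sorts, terms and substitutions, and the
-- corresponding equality judgments.
mutual
inductive IsTele : Thy → Tele → Prop
  | nil : IsTele T []
  | snoc : IsTele T Ψ → IsSrt T Ψ A → x ∉ Ψ.map Prod.fst → IsTele T ((x, A) :: Ψ)
inductive IsSrt : Thy → Tele → Srt → Prop
  | form : Entry.sortDecl ϑ Φ ∈ T → IsSubst T Ψ φ Φ → IsSrt T Ψ (.cut ϑ φ)
inductive EqSrt : Thy → Tele → Srt → Srt → Prop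
  | refl : IsSrt T Ψ A → EqSrt T Ψ A A
  | symm : EqSrt T Ψ A₀ A₁ → EqSrt T Ψ A₁ A₀
  | trans : EqSrt T Ψ A₀ A₁ → EqSrt T Ψ A₁ A₂ → EqSrt T Ψ A₀ A₂
  | subst : EqSrt T Φ A₀ A₁ → EqSubst T Ψ φ₀ φ₁ Φ →
      EqSrt T Ψ (A₀.subst φ₀) (A₁.subst φ₁)
  | ax : Entry.sortAx Ψ A₀ A₁ ∈ T → EqSrt T Ψ A₀ A₁
inductive IsTm : Thy → Tele → Tm → Srt → Prop
  | form : Entry.opDecl ϑ Φ A ∈ T → IsSubst T Ψ φ Φ → IsTm T Ψ (.op ϑ φ) (A.subst φ)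
  | var : IsTm T ((x, A) :: Ψ) (.var x) A
  | conv : EqSrt T Ψ A₀ A₁ → IsTm T Ψ M A₀ → IsTm T Ψ M A₁
inductive EqTm : Thy → Tele → Tm → Tm → Srt → Prop
  | refl : IsTm T Ψ M A → EqTm T Ψ M M A
  | symm : EqTm T Ψ M₀ M₁ A → EqTm T Ψ M₁ M₀ A
  | trans : EqTm T Ψ M₀ M₁ A → EqTm T Ψ M₁ M₂ A → EqTm T Ψ M₀ M₂ A
  | conv : EqTm T Ψ M₀ M₁ A₀ → EqSrt T Ψ A₀ A₁ → EqTm T Ψ M₀ M₁ A₁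
  | subst : EqTm T Φ M₀ M₁ A → EqSubst T Ψ φ₀ φ₁ Φ →
      EqTm T Ψ (M₀.subst φ₀) (M₁.subst φ₁) (A.subst φ₀)
  | ax : Entry.termAx Ψ M₀ M₁ A ∈ T → EqTm T Ψ M₀ M₁ A
inductive IsSubst : Thy → Tele → Subst → Tele → Prop
  | nil : IsSubst T Φ .nil []
  | snoc : IsSubst T Φ ψ Ψ → IsTm T Φ M (A.subst ψ) →
      IsSubst T Φ (.snoc ψ M x) ((x, A) :: Ψ)
inductive EqSubst : Thy → Tele → Subst → Subst → Tele → Prop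
  | nil : EqSubst T Φ .nil .nil []
  | snoc : EqSubst T Φ ψ₀ ψ₁ Ψ → EqTm T Φ M₀ M₁ (A.subst ψ₀) →
      EqSubst T Φ (.snoc ψ₀ M₀ x) (.snoc ψ₁ M₁ x) ((x, A) :: Ψ)
end

-- Well-formed generalized algebraic theories.
inductive IsThy : Thy → Prop
  | nil : IsThy []
  | sortDecl : IsThy T → IsTele T Ψ → (∀ e ∈ T, e.name ≠ some ϑ) →
      IsThy (.sortDecl ϑ Ψ :: T)
  | opDecl : IsThy T → IsTele T Ψ → IsSrt T Ψ A → (∀ e ∈ T, e.name ≠ some ϑ) →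
      IsThy (.opDecl ϑ Ψ A :: T)
  | sortAx : IsThy T → IsTele T Ψ → IsSrt T Ψ A₀ → IsSrt T Ψ A₁ →
      IsThy (.sortAx Ψ A₀ A₁ :: T)
  | termAx : IsThy T → IsTele T Ψ → IsSrt T Ψ A → IsTm T Ψ M₀ A → IsTm T Ψ M₁ A →
      IsThy (.termAx Ψ M₀ M₁ A :: T)

section Aux

/-! ### Raw syntactic material: free variables, domains -/

mutual
def Tm.fv : Tm → List ℕ
  | .var x => [x]
  | .op _ ψ => ψ.fv
def Subst.fv : Subst → List ℕ
  | .nil => []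
  | .snoc ψ M _ => ψ.fv ++ M.fv
end

def Srt.fv : Srt → List ℕ
  | .cut _ ψ => ψ.fv

def Subst.dom : Subst → List ℕ
  | .nil => []
  | .snoc ψ _ x => x :: ψ.dom

def Tele.names (Γ : Tele) : List ℕ := Γ.map Prod.fst

def Tele.hd : Tele → List ℕ
  | [] => []
  | (x, _) :: _ => [x]

def Tele.scoped : Tele → Prop
  | [] => True
  | (_, A) :: Γ => A.fv ⊆ Tele.names Γ ∧ Tele.scoped Γ

lemma Tele.hd_subset_names : ∀ Γ : Tele, Γ.hd ⊆ Γ.names := by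
  intro Γ; cases Γ with
  | nil => simp [Tele.hd]
  | cons p Γ => cases p; simp [Tele.hd, Tele.names]

/-- Substituting a variable whose name is not in the domain. -/
lemma Tm.var_subst_not_dom {x : ℕ} : ∀ {φ : Subst}, x ∉ φ.dom →
    (Tm.var x).subst φ = .var x
  | .nil, _ => by simp [Tm.subst]
  | .snoc ψ M y, h => by
      have hy : y ≠ x := by
        intro e; exact h (by simp [Subst.dom, e])
      have : x ∉ ψ.dom := fun hx => h (by simp [Subst.dom, hx])
      simp [Tm.subst, hy, Tm.var_subst_not_dom this]

lemma Tm.var_subst_head {x : ℕ} {ψ : Subst} {M : Tm} :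
    (Tm.var x).subst (.snoc ψ M x) = M := by
  simp [Tm.subst]

/-- fv of a variable-lookup is contained in the fv of the substitution. -/
lemma Tm.var_subst_fv_sub {x : ℕ} : ∀ {φ : Subst}, x ∈ φ.dom →
    ((Tm.var x).subst φ).fv ⊆ φ.fv
  | .nil, h => by simp [Subst.dom] at h
  | .snoc ψ M y, h => by
      by_cases hy : y = x
      · subst hy; simp [Tm.subst, Subst.fv]
      · have : x ∈ ψ.dom := by
          rcases (by simpa [Subst.dom] using h) with h' | h'
          · exact absurd h'.symm hy
          · exact h'
        simp only [Tm.subst, if_neg hy]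
        exact List.Subset.trans (Tm.var_subst_fv_sub this) (by simp [Subst.fv])

mutual
/-- Decomposition of fv after substitution. -/
theorem Tm.fv_subst_mem : ∀ (M : Tm) (φ : Subst) (z : ℕ),
    z ∈ (M.subst φ).fv → ∃ y ∈ M.fv, z ∈ ((Tm.var y).subst φ).fv
  | .var x, φ, z, h => ⟨x, by simp [Tm.fv], h⟩
  | .op ϑ ρ, φ, z, h => by
      have := Subst.fv_comp_mem ρ φ z (by simpa [Tm.subst, Tm.fv] using h)
      simpa [Tm.fv] using this
theorem Subst.fv_comp_mem : ∀ (ρ φ : Subst) (z : ℕ),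
    z ∈ (ρ.comp φ).fv → ∃ y ∈ ρ.fv, z ∈ ((Tm.var y).subst φ).fv
  | .nil, φ, z, h => by simp [Subst.comp, Subst.fv] at h
  | .snoc ρ N x, φ, z, h => by
      rcases (by simpa [Subst.comp, Subst.fv] using h) with h' | h'
      · obtain ⟨y, hy, hz⟩ := Subst.fv_comp_mem ρ φ z h'
        exact ⟨y, by simp [Subst.fv, hy], hz⟩
      · obtain ⟨y, hy, hz⟩ := Tm.fv_subst_mem N φ z h'
        exact ⟨y, by simp [Subst.fv, hy], hz⟩
end

theorem Srt.fv_subst_mem (A : Srt) (φ : Subst) (z : ℕ)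
    (h : z ∈ (A.subst φ).fv) : ∃ y ∈ A.fv, z ∈ ((Tm.var y).subst φ).fv := by
  cases A with
  | cut ϑ ρ => exact Subst.fv_comp_mem ρ φ z (by simpa [Srt.subst, Srt.fv] using h)

mutual
/-- Monotonicity: fv occurrences of a variable's image survive. -/
theorem Tm.fv_subst_mono : ∀ (M : Tm) (φ : Subst) (y : ℕ), y ∈ M.fv →
    ((Tm.var y).subst φ).fv ⊆ (M.subst φ).fv
  | .var x, φ, y, h => by
      have : y = x := by simpa [Tm.fv] using h
      subst this; exact fun _ h => h
  | .op ϑ ρ, φ, y, h => by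
      have := Subst.fv_comp_mono ρ φ y (by simpa [Tm.fv] using h)
      simpa [Tm.subst, Tm.fv] using this
theorem Subst.fv_comp_mono : ∀ (ρ φ : Subst) (y : ℕ), y ∈ ρ.fv →
    ((Tm.var y).subst φ).fv ⊆ (ρ.comp φ).fv
  | .nil, φ, y, h => by simp [Subst.fv] at h
  | .snoc ρ N x, φ, y, h => by
      rcases (by simpa [Subst.fv] using h) with h' | h'
      · exact List.Subset.trans (Subst.fv_comp_mono ρ φ y h') (by simp [Subst.comp, Subst.fv])
      · exact List.Subset.trans (Tm.fv_subst_mono N φ y h') (by simp [Subst.comp, Subst.fv])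
end

theorem Srt.fv_subst_mono (A : Srt) (φ : Subst) (y : ℕ) (h : y ∈ A.fv) :
    ((Tm.var y).subst φ).fv ⊆ (A.subst φ).fv := by
  cases A with
  | cut ϑ ρ =>
    have := Subst.fv_comp_mono ρ φ y (by simpa [Srt.fv] using h)
    simpa [Srt.subst, Srt.fv] using this

/-- Covered substitution keeps fv inside the substitution's fv. -/
theorem Srt.fv_subst_sub {A : Srt} {φ : Subst} (hcov : A.fv ⊆ φ.dom) :
    (A.subst φ).fv ⊆ φ.fv := by
  intro z hz
  obtain ⟨y, hy, hz'⟩ := Srt.fv_subst_mem A φ z hz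
  exact Tm.var_subst_fv_sub (hcov hy) hz'

/-- Stale variables survive substitution. -/
theorem Srt.fv_subst_stale {A : Srt} {φ : Subst} {z : ℕ} (hz : z ∈ A.fv)
    (hd : z ∉ φ.dom) : z ∈ (A.subst φ).fv := by
  have := Srt.fv_subst_mono A φ z hz
  rw [Tm.var_subst_not_dom hd] at this
  exact this (by simp [Tm.fv])

mutual
/-- Associativity of substitution for covered terms. -/
theorem Tm.subst_subst : ∀ (M : Tm) (φ ψ : Subst), M.fv ⊆ φ.dom →
    (M.subst φ).subst ψ = M.subst (φ.comp ψ)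
  | .var x, φ, ψ, h => Tm.var_subst_subst φ ψ x (h (by simp [Tm.fv]))
  | .op ϑ ρ, φ, ψ, h => by
      simp only [Tm.subst]
      rw [Subst.comp_assoc ρ φ ψ (by simpa [Tm.fv] using h)]
theorem Subst.comp_assoc : ∀ (ρ φ ψ : Subst), ρ.fv ⊆ φ.dom →
    (ρ.comp φ).comp ψ = ρ.comp (φ.comp ψ)
  | .nil, φ, ψ, h => by simp [Subst.comp]
  | .snoc ρ N x, φ, ψ, h => by
      have h₁ : ρ.fv ⊆ φ.dom := fun y hy => h (by simp [Subst.fv, hy])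
      have h₂ : N.fv ⊆ φ.dom := fun y hy => h (by simp [Subst.fv, hy])
      simp only [Subst.comp]
      rw [Subst.comp_assoc ρ φ ψ h₁, Tm.subst_subst N φ ψ h₂]
/-- var lookup associativity. -/
theorem Tm.var_subst_subst : ∀ (φ ψ : Subst) (x : ℕ), x ∈ φ.dom →
    ((Tm.var x).subst φ).subst ψ = (Tm.var x).subst (φ.comp ψ)
  | .nil, ψ, x, h => by simp [Subst.dom] at h
  | .snoc φ M y, ψ, x, h => by
      by_cases hy : y = x
      · subst hy; simp [Tm.subst, Subst.comp]
      · have : x ∈ φ.dom := by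
          rcases (by simpa [Subst.dom] using h) with h' | h'
          · exact absurd h'.symm hy
          · exact h'
        simp only [Tm.subst, Subst.comp, if_neg hy]
        exact Tm.var_subst_subst φ ψ x this
end

theorem Srt.subst_subst (A : Srt) (φ ψ : Subst) (h : A.fv ⊆ φ.dom) :
    (A.subst φ).subst ψ = A.subst (φ.comp ψ) := by
  cases A with
  | cut ϑ ρ =>
    simp only [Srt.subst]
    rw [Subst.comp_assoc ρ φ ψ (by simpa [Srt.fv] using h)]

mutual
/-- Irrelevance: substitution ignores entries for absent variables. -/
theorem Tm.subst_snoc_irrel : ∀ (M : Tm) (ψ : Subst) (N : Tm) (x : ℕ),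
    x ∉ M.fv → M.subst (.snoc ψ N x) = M.subst ψ
  | .var y, ψ, N, x, h => by
      have : x ≠ y := by simpa [Tm.fv, eq_comm] using h
      simp [Tm.subst, this]
  | .op ϑ ρ, ψ, N, x, h => by
      simp only [Tm.subst]
      rw [Subst.comp_snoc_irrel ρ ψ N x (by simpa [Tm.fv] using h)]
theorem Subst.comp_snoc_irrel : ∀ (ρ ψ : Subst) (N : Tm) (x : ℕ),
    x ∉ ρ.fv → ρ.comp (.snoc ψ N x) = ρ.comp ψ
  | .nil, ψ, N, x, h => by simp [Subst.comp]
  | .snoc ρ P y, ψ, N, x, h => by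
      have h₁ : x ∉ ρ.fv := fun hx => h (by simp [Subst.fv, hx])
      have h₂ : x ∉ P.fv := fun hx => h (by simp [Subst.fv, hx])
      simp only [Subst.comp]
      rw [Subst.comp_snoc_irrel ρ ψ N x h₁, Tm.subst_snoc_irrel P ψ N x h₂]
end

theorem Srt.subst_snoc_irrel (A : Srt) (ψ : Subst) (N : Tm) (x : ℕ)
    (h : x ∉ A.fv) : A.subst (.snoc ψ N x) = A.subst ψ := by
  cases A with
  | cut ϑ ρ =>
    simp only [Srt.subst]
    rw [Subst.comp_snoc_irrel ρ ψ N x (by simpa [Srt.fv] using h)]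

end Aux
section Judg

/-! ### Basic judgment lemmas: domains, reflexivity of substitution equality,
    well-formedness of theory entries. -/

lemma IsSubst.dom_eq {T : Thy} {Φ : Tele} :
    ∀ {ψ : Subst} {Ψ : Tele}, IsSubst T Φ ψ Ψ → ψ.dom = Ψ.names
  | .nil, _, h => by cases h; rfl
  | .snoc ψ M x, _, h => by
      cases h with
      | snoc h1 h2 =>
        simp [Subst.dom, Tele.names, IsSubst.dom_eq h1, Tele.names]

lemma EqSubst.dom_eq {T : Thy} {Φ : Tele} :
    ∀ {ψ₀ : Subst} {ψ₁ : Subst} {Ψ : Tele}, EqSubst T Φ ψ₀ ψ₁ Ψ →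
      ψ₀.dom = Ψ.names ∧ ψ₁.dom = Ψ.names
  | .nil, _, _, h => by cases h; exact ⟨rfl, rfl⟩
  | .snoc ψ M x, _, _, h => by
      cases h with
      | snoc h1 h2 =>
        obtain ⟨e1, e2⟩ := EqSubst.dom_eq h1
        constructor <;> simp [Subst.dom, Tele.names, e1, e2]

lemma IsSubst.toEq {T : Thy} {Φ : Tele} :
    ∀ {ψ : Subst} {Ψ : Tele}, IsSubst T Φ ψ Ψ → EqSubst T Φ ψ ψ Ψ
  | .nil, _, h => by cases h; exact .nil
  | .snoc ψ M x, _, h => by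
      cases h with
      | snoc h1 h2 => exact .snoc (IsSubst.toEq h1) (.refl h2)

/-! Well-formedness of entries of a well-formed theory, over a shorter theory. -/

lemma IsThy.sortDecl_wf {T : Thy} (hT : IsThy T) {ϑ : ℕ} {Ξ : Tele}
    (hmem : Entry.sortDecl ϑ Ξ ∈ T) :
    ∃ T', T'.length < T.length ∧ IsThy T' ∧ IsTele T' Ξ := by
  induction hT with
  | nil => simp at hmem
  | sortDecl h1 h2 h3 ih =>
    rcases List.mem_cons.1 hmem with h | h
    · cases h; exact ⟨_, by simp, h1, h2⟩
    · obtain ⟨T', hlen, h⟩ := ih h; exact ⟨T', by simpa using Nat.lt_succ_of_lt hlen, h⟩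
  | opDecl h1 h2 h3 h4 ih =>
    rcases List.mem_cons.1 hmem with h | h
    · cases h
    · obtain ⟨T', hlen, h⟩ := ih h; exact ⟨T', by simpa using Nat.lt_succ_of_lt hlen, h⟩
  | sortAx h1 h2 h3 h4 ih =>
    rcases List.mem_cons.1 hmem with h | h
    · cases h
    · obtain ⟨T', hlen, h⟩ := ih h; exact ⟨T', by simpa using Nat.lt_succ_of_lt hlen, h⟩
  | termAx h1 h2 h3 h4 h5 ih =>
    rcases List.mem_cons.1 hmem with h | h
    · cases h
    · obtain ⟨T', hlen, h⟩ := ih h; exact ⟨T', by simpa using Nat.lt_succ_of_lt hlen, h⟩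

lemma IsThy.opDecl_wf {T : Thy} (hT : IsThy T) {ϑ : ℕ} {Ξ : Tele} {C : Srt}
    (hmem : Entry.opDecl ϑ Ξ C ∈ T) :
    ∃ T', T'.length < T.length ∧ IsThy T' ∧ IsTele T' Ξ ∧ IsSrt T' Ξ C := by
  induction hT with
  | nil => simp at hmem
  | sortDecl h1 h2 h3 ih =>
    rcases List.mem_cons.1 hmem with h | h
    · cases h
    · obtain ⟨T', hlen, h⟩ := ih h; exact ⟨T', by simpa using Nat.lt_succ_of_lt hlen, h⟩
  | opDecl h1 h2 h3 h4 ih =>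
    rcases List.mem_cons.1 hmem with h | h
    · cases h; exact ⟨_, by simp, h1, h2, h3⟩
    · obtain ⟨T', hlen, h⟩ := ih h; exact ⟨T', by simpa using Nat.lt_succ_of_lt hlen, h⟩
  | sortAx h1 h2 h3 h4 ih =>
    rcases List.mem_cons.1 hmem with h | h
    · cases h
    · obtain ⟨T', hlen, h⟩ := ih h; exact ⟨T', by simpa using Nat.lt_succ_of_lt hlen, h⟩
  | termAx h1 h2 h3 h4 h5 ih =>
    rcases List.mem_cons.1 hmem with h | h
    · cases h
    · obtain ⟨T', hlen, h⟩ := ih h; exact ⟨T', by simpa using Nat.lt_succ_of_lt hlen, h⟩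

lemma IsThy.sortAx_wf {T : Thy} (hT : IsThy T) {Ψ : Tele} {A₀ A₁ : Srt}
    (hmem : Entry.sortAx Ψ A₀ A₁ ∈ T) :
    ∃ T', T'.length < T.length ∧ IsThy T' ∧ IsTele T' Ψ ∧
      IsSrt T' Ψ A₀ ∧ IsSrt T' Ψ A₁ := by
  induction hT with
  | nil => simp at hmem
  | sortDecl h1 h2 h3 ih =>
    rcases List.mem_cons.1 hmem with h | h
    · cases h
    · obtain ⟨T', hlen, h⟩ := ih h; exact ⟨T', by simpa using Nat.lt_succ_of_lt hlen, h⟩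
  | opDecl h1 h2 h3 h4 ih =>
    rcases List.mem_cons.1 hmem with h | h
    · cases h
    · obtain ⟨T', hlen, h⟩ := ih h; exact ⟨T', by simpa using Nat.lt_succ_of_lt hlen, h⟩
  | sortAx h1 h2 h3 h4 ih =>
    rcases List.mem_cons.1 hmem with h | h
    · cases h; exact ⟨_, by simp, h1, h2, h3, h4⟩
    · obtain ⟨T', hlen, h⟩ := ih h; exact ⟨T', by simpa using Nat.lt_succ_of_lt hlen, h⟩
  | termAx h1 h2 h3 h4 h5 ih =>
    rcases List.mem_cons.1 hmem with h | h
    · cases h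
    · obtain ⟨T', hlen, h⟩ := ih h; exact ⟨T', by simpa using Nat.lt_succ_of_lt hlen, h⟩

lemma IsThy.termAx_wf {T : Thy} (hT : IsThy T) {Ψ : Tele} {M₀ M₁ : Tm} {A : Srt}
    (hmem : Entry.termAx Ψ M₀ M₁ A ∈ T) :
    ∃ T', T'.length < T.length ∧ IsThy T' ∧ IsTele T' Ψ ∧
      IsTm T' Ψ M₀ A ∧ IsTm T' Ψ M₁ A := by
  induction hT with
  | nil => simp at hmem
  | sortDecl h1 h2 h3 ih =>
    rcases List.mem_cons.1 hmem with h | h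
    · cases h
    · obtain ⟨T', hlen, h⟩ := ih h; exact ⟨T', by simpa using Nat.lt_succ_of_lt hlen, h⟩
  | opDecl h1 h2 h3 h4 ih =>
    rcases List.mem_cons.1 hmem with h | h
    · cases h
    · obtain ⟨T', hlen, h⟩ := ih h; exact ⟨T', by simpa using Nat.lt_succ_of_lt hlen, h⟩
  | sortAx h1 h2 h3 h4 ih =>
    rcases List.mem_cons.1 hmem with h | h
    · cases h
    · obtain ⟨T', hlen, h⟩ := ih h; exact ⟨T', by simpa using Nat.lt_succ_of_lt hlen, h⟩
  | termAx h1 h2 h3 h4 h5 ih =>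
    rcases List.mem_cons.1 hmem with h | h
    · cases h; exact ⟨_, by simp, h1, ‹_›, h4, h5⟩
    · obtain ⟨T', hlen, h⟩ := ih h; exact ⟨T', by simpa using Nat.lt_succ_of_lt hlen, h⟩

end Judg
section FSuite

/-! ### The head-variable lemma suite: subjects of derivable judgments only
    mention the head variable of the context. -/

structure FPack (T : Thy) : Prop where
  f1 : ∀ {Γ : Tele}, IsTele T Γ → Γ.scoped
  f2 : ∀ {Γ : Tele} {A : Srt}, IsSrt T Γ A → A.fv ⊆ Γ.hd
  f3 : ∀ {Γ : Tele} {A₀ A₁ : Srt}, EqSrt T Γ A₀ A₁ → A₀.fv ⊆ Γ.hd ∧ A₁.fv ⊆ Γ.hd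
  f4 : ∀ {Γ : Tele} {N : Tm} {B : Srt}, IsTm T Γ N B → N.fv ⊆ Γ.hd
  f5 : ∀ {Γ : Tele} {N₀ N₁ : Tm} {B : Srt}, EqTm T Γ N₀ N₁ B →
        N₀.fv ⊆ Γ.hd ∧ N₁.fv ⊆ Γ.hd
  f6 : ∀ {Γ : Tele} {φ : Subst} {Ξ : Tele}, IsSubst T Γ φ Ξ → φ.fv ⊆ Γ.hd
  f7 : ∀ {Γ : Tele} {φ₀ φ₁ : Subst} {Θ : Tele}, EqSubst T Γ φ₀ φ₁ Θ →
        φ₀.fv ⊆ Γ.hd ∧ φ₁.fv ⊆ Γ.hd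

private lemma fv_subst_hd {Γ Θ : Tele} {B : Srt} {φ : Subst}
    (hB : B.fv ⊆ Θ.hd) (hdom : φ.dom = Θ.names) (hφ : φ.fv ⊆ Γ.hd) :
    (B.subst φ).fv ⊆ Γ.hd := by
  intro z hz
  obtain ⟨y, hy, hz'⟩ := Srt.fv_subst_mem B φ z hz
  have : y ∈ φ.dom := by rw [hdom]; exact Tele.hd_subset_names Θ (hB hy)
  exact hφ (Tm.var_subst_fv_sub this hz')

private lemma fv_subst_hd_tm {Γ Θ : Tele} {N : Tm} {φ : Subst}
    (hN : N.fv ⊆ Θ.hd) (hdom : φ.dom = Θ.names) (hφ : φ.fv ⊆ Γ.hd) :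
    (N.subst φ).fv ⊆ Γ.hd := by
  intro z hz
  obtain ⟨y, hy, hz'⟩ := Tm.fv_subst_mem N φ z hz
  have : y ∈ φ.dom := by rw [hdom]; exact Tele.hd_subset_names Θ (hN hy)
  exact hφ (Tm.var_subst_fv_sub this hz')

theorem fpack_aux : ∀ (n : ℕ) (T : Thy), T.length < n → IsThy T → FPack T := by
  intro n
  induction n with
  | zero => intro T h; omega
  | succ n ihn =>
    intro T hlen hT
    have IH : ∀ T' : Thy, T'.length < T.length → IsThy T' → FPack T' :=
      fun T' h' => ihn T' (by omega)
    have c1 : Tele.scoped ([] : Tele) := trivial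
    have c2 : ∀ {Ψ : Tele} {A : Srt} {x : ℕ}, IsTele T Ψ → IsSrt T Ψ A →
        x ∉ List.map Prod.fst Ψ → Tele.scoped Ψ → A.fv ⊆ Ψ.hd →
        Tele.scoped ((x, A) :: Ψ) := by
      intro Ψ A x _ _ _ ih1 ih2
      exact ⟨List.Subset.trans ih2 (Tele.hd_subset_names Ψ), ih1⟩
    have c3 : ∀ {ϑ : ℕ} {Φ Ψ : Tele} {φ : Subst}, Entry.sortDecl ϑ Φ ∈ T →
        IsSubst T Ψ φ Φ → φ.fv ⊆ Ψ.hd → (Srt.cut ϑ φ).fv ⊆ Ψ.hd := by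
      intro _ _ _ _ _ _ ih; simpa [Srt.fv] using ih
    have c4 : ∀ {Ψ : Tele} {A : Srt}, IsSrt T Ψ A → A.fv ⊆ Ψ.hd →
        A.fv ⊆ Ψ.hd ∧ A.fv ⊆ Ψ.hd := fun _ ih => ⟨ih, ih⟩
    have c5 : ∀ {Ψ : Tele} {A₀ A₁ : Srt}, EqSrt T Ψ A₀ A₁ →
        A₀.fv ⊆ Ψ.hd ∧ A₁.fv ⊆ Ψ.hd → A₁.fv ⊆ Ψ.hd ∧ A₀.fv ⊆ Ψ.hd :=
      fun _ ih => ⟨ih.2, ih.1⟩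
    have c6 : ∀ {Ψ : Tele} {A₀ A₁ A₂ : Srt}, EqSrt T Ψ A₀ A₁ → EqSrt T Ψ A₁ A₂ →
        A₀.fv ⊆ Ψ.hd ∧ A₁.fv ⊆ Ψ.hd → A₁.fv ⊆ Ψ.hd ∧ A₂.fv ⊆ Ψ.hd →
        A₀.fv ⊆ Ψ.hd ∧ A₂.fv ⊆ Ψ.hd := fun _ _ ih1 ih2 => ⟨ih1.1, ih2.2⟩
    have c7 : ∀ {Φ : Tele} {A₀ A₁ : Srt} {Ψ : Tele} {φ₀ φ₁ : Subst},
        EqSrt T Φ A₀ A₁ → (w : EqSubst T Ψ φ₀ φ₁ Φ) →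
        A₀.fv ⊆ Φ.hd ∧ A₁.fv ⊆ Φ.hd → φ₀.fv ⊆ Ψ.hd ∧ φ₁.fv ⊆ Ψ.hd →
        (A₀.subst φ₀).fv ⊆ Ψ.hd ∧ (A₁.subst φ₁).fv ⊆ Ψ.hd := by
      intro Φ A₀ A₁ Ψ φ₀ φ₁ _ w ih ihw
      obtain ⟨d0, d1⟩ := EqSubst.dom_eq w
      exact ⟨fv_subst_hd ih.1 d0 ihw.1, fv_subst_hd ih.2 d1 ihw.2⟩
    have c8 : ∀ {Ψ : Tele} {A₀ A₁ : Srt}, Entry.sortAx Ψ A₀ A₁ ∈ T →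
        A₀.fv ⊆ Ψ.hd ∧ A₁.fv ⊆ Ψ.hd := by
      intro Ψ A₀ A₁ hmem
      obtain ⟨T', hl, hT', _, h0, h1⟩ := hT.sortAx_wf hmem
      exact ⟨(IH T' hl hT').f2 h0, (IH T' hl hT').f2 h1⟩
    have c9 : ∀ {ϑ : ℕ} {Φ : Tele} {A : Srt} {Ψ : Tele} {φ : Subst},
        Entry.opDecl ϑ Φ A ∈ T → IsSubst T Ψ φ Φ → φ.fv ⊆ Ψ.hd →
        (Tm.op ϑ φ).fv ⊆ Ψ.hd := by
      intro _ _ _ _ _ _ _ ih; simpa [Tm.fv] using ih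
    have c10 : ∀ {x : ℕ} {A : Srt} {Ψ : List (ℕ × Srt)},
        (Tm.var x).fv ⊆ Tele.hd ((x, A) :: Ψ) := by
      intro x A Ψ; simp [Tm.fv, Tele.hd]
    have c11 : ∀ {Ψ : Tele} {A₀ A₁ : Srt} {M : Tm}, EqSrt T Ψ A₀ A₁ →
        IsTm T Ψ M A₀ → A₀.fv ⊆ Ψ.hd ∧ A₁.fv ⊆ Ψ.hd → M.fv ⊆ Ψ.hd →
        M.fv ⊆ Ψ.hd := fun _ _ _ ih => ih
    have c12 : ∀ {Ψ : Tele} {M : Tm} {A : Srt}, IsTm T Ψ M A → M.fv ⊆ Ψ.hd →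
        M.fv ⊆ Ψ.hd ∧ M.fv ⊆ Ψ.hd := fun _ ih => ⟨ih, ih⟩
    have c13 : ∀ {Ψ : Tele} {M₀ M₁ : Tm} {A : Srt}, EqTm T Ψ M₀ M₁ A →
        M₀.fv ⊆ Ψ.hd ∧ M₁.fv ⊆ Ψ.hd → M₁.fv ⊆ Ψ.hd ∧ M₀.fv ⊆ Ψ.hd :=
      fun _ ih => ⟨ih.2, ih.1⟩
    have c14 : ∀ {Ψ : Tele} {M₀ M₁ : Tm} {A : Srt} {M₂ : Tm}, EqTm T Ψ M₀ M₁ A →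
        EqTm T Ψ M₁ M₂ A → M₀.fv ⊆ Ψ.hd ∧ M₁.fv ⊆ Ψ.hd →
        M₁.fv ⊆ Ψ.hd ∧ M₂.fv ⊆ Ψ.hd → M₀.fv ⊆ Ψ.hd ∧ M₂.fv ⊆ Ψ.hd :=
      fun _ _ ih1 ih2 => ⟨ih1.1, ih2.2⟩
    have c15 : ∀ {Ψ : Tele} {M₀ M₁ : Tm} {A₀ A₁ : Srt}, EqTm T Ψ M₀ M₁ A₀ →
        EqSrt T Ψ A₀ A₁ → M₀.fv ⊆ Ψ.hd ∧ M₁.fv ⊆ Ψ.hd →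
        A₀.fv ⊆ Ψ.hd ∧ A₁.fv ⊆ Ψ.hd → M₀.fv ⊆ Ψ.hd ∧ M₁.fv ⊆ Ψ.hd :=
      fun _ _ ih _ => ih
    have c16 : ∀ {Φ : Tele} {M₀ M₁ : Tm} {A : Srt} {Ψ : Tele} {φ₀ φ₁ : Subst},
        EqTm T Φ M₀ M₁ A → (w : EqSubst T Ψ φ₀ φ₁ Φ) →
        M₀.fv ⊆ Φ.hd ∧ M₁.fv ⊆ Φ.hd → φ₀.fv ⊆ Ψ.hd ∧ φ₁.fv ⊆ Ψ.hd →
        (M₀.subst φ₀).fv ⊆ Ψ.hd ∧ (M₁.subst φ₁).fv ⊆ Ψ.hd := by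
      intro Φ M₀ M₁ A Ψ φ₀ φ₁ _ w ih ihw
      obtain ⟨d0, d1⟩ := EqSubst.dom_eq w
      exact ⟨fv_subst_hd_tm ih.1 d0 ihw.1, fv_subst_hd_tm ih.2 d1 ihw.2⟩
    have c17 : ∀ {Ψ : Tele} {M₀ M₁ : Tm} {A : Srt}, Entry.termAx Ψ M₀ M₁ A ∈ T →
        M₀.fv ⊆ Ψ.hd ∧ M₁.fv ⊆ Ψ.hd := by
      intro Ψ M₀ M₁ A hmem
      obtain ⟨T', hl, hT', _, h0, h1⟩ := hT.termAx_wf hmem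
      exact ⟨(IH T' hl hT').f4 h0, (IH T' hl hT').f4 h1⟩
    have c18 : ∀ {Φ : Tele}, (Subst.nil).fv ⊆ Φ.hd := by
      intro Φ; simp [Subst.fv]
    have c19 : ∀ {Φ : Tele} {ψ : Subst} {Ψ : Tele} {M : Tm} {x : ℕ} {A : Srt},
        IsSubst T Φ ψ Ψ → IsTm T Φ M (A.subst ψ) → ψ.fv ⊆ Φ.hd →
        M.fv ⊆ Φ.hd → (Subst.snoc ψ M x).fv ⊆ Φ.hd := by
      intro Φ ψ Ψ M x A _ _ ih1 ih2
      simpa [Subst.fv] using List.append_subset.2 ⟨ih1, ih2⟩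
    have c20 : ∀ {Φ : Tele}, (Subst.nil).fv ⊆ Φ.hd ∧ (Subst.nil).fv ⊆ Φ.hd := by
      intro Φ; constructor <;> simp [Subst.fv]
    have c21 : ∀ {Φ : Tele} {ψ₀ ψ₁ : Subst} {Ψ : Tele} {M₀ M₁ : Tm} {x : ℕ}
        {A : Srt}, EqSubst T Φ ψ₀ ψ₁ Ψ → EqTm T Φ M₀ M₁ (A.subst ψ₀) →
        ψ₀.fv ⊆ Φ.hd ∧ ψ₁.fv ⊆ Φ.hd → M₀.fv ⊆ Φ.hd ∧ M₁.fv ⊆ Φ.hd →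
        (Subst.snoc ψ₀ M₀ x).fv ⊆ Φ.hd ∧ (Subst.snoc ψ₁ M₁ x).fv ⊆ Φ.hd := by
      intro Φ ψ₀ ψ₁ Ψ M₀ M₁ x A _ _ ih1 ih2
      exact ⟨by simpa [Subst.fv] using List.append_subset.2 ⟨ih1.1, ih2.1⟩,
             by simpa [Subst.fv] using List.append_subset.2 ⟨ih1.2, ih2.2⟩⟩
    refine ⟨?_, ?_, ?_, ?_, ?_, ?_, ?_⟩
    · exact fun {Γ} h => IsTele.rec (motive_1 := fun Γ _ => Tele.scoped Γ)
        (motive_2 := fun Γ A _ => A.fv ⊆ Γ.hd)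
        (motive_3 := fun Γ A₀ A₁ _ => A₀.fv ⊆ Γ.hd ∧ A₁.fv ⊆ Γ.hd)
        (motive_4 := fun Γ N B _ => N.fv ⊆ Γ.hd)
        (motive_5 := fun Γ N₀ N₁ B _ => N₀.fv ⊆ Γ.hd ∧ N₁.fv ⊆ Γ.hd)
        (motive_6 := fun Γ φ Ξ _ => φ.fv ⊆ Γ.hd)
        (motive_7 := fun Γ φ₀ φ₁ Θ _ => φ₀.fv ⊆ Γ.hd ∧ φ₁.fv ⊆ Γ.hd)
        c1 c2 c3 c4 c5 c6 c7 c8 c9 (fun {x A Ψ} => @c10 x A Ψ) c11 c12 c13 c14 c15 c16 c17 (fun {Φ} => @c18 Φ) c19 (fun {Φ} => @c20 Φ) c21 h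
    · exact fun {Γ A} h => IsSrt.rec (motive_1 := fun Γ _ => Tele.scoped Γ)
        (motive_2 := fun Γ A _ => A.fv ⊆ Γ.hd)
        (motive_3 := fun Γ A₀ A₁ _ => A₀.fv ⊆ Γ.hd ∧ A₁.fv ⊆ Γ.hd)
        (motive_4 := fun Γ N B _ => N.fv ⊆ Γ.hd)
        (motive_5 := fun Γ N₀ N₁ B _ => N₀.fv ⊆ Γ.hd ∧ N₁.fv ⊆ Γ.hd)
        (motive_6 := fun Γ φ Ξ _ => φ.fv ⊆ Γ.hd)
        (motive_7 := fun Γ φ₀ φ₁ Θ _ => φ₀.fv ⊆ Γ.hd ∧ φ₁.fv ⊆ Γ.hd)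
        c1 c2 c3 c4 c5 c6 c7 c8 c9 (fun {x A Ψ} => @c10 x A Ψ) c11 c12 c13 c14 c15 c16 c17 (fun {Φ} => @c18 Φ) c19 (fun {Φ} => @c20 Φ) c21 h
    · exact fun {Γ A₀ A₁} h => EqSrt.rec (motive_1 := fun Γ _ => Tele.scoped Γ)
        (motive_2 := fun Γ A _ => A.fv ⊆ Γ.hd)
        (motive_3 := fun Γ A₀ A₁ _ => A₀.fv ⊆ Γ.hd ∧ A₁.fv ⊆ Γ.hd)
        (motive_4 := fun Γ N B _ => N.fv ⊆ Γ.hd)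
        (motive_5 := fun Γ N₀ N₁ B _ => N₀.fv ⊆ Γ.hd ∧ N₁.fv ⊆ Γ.hd)
        (motive_6 := fun Γ φ Ξ _ => φ.fv ⊆ Γ.hd)
        (motive_7 := fun Γ φ₀ φ₁ Θ _ => φ₀.fv ⊆ Γ.hd ∧ φ₁.fv ⊆ Γ.hd)
        c1 c2 c3 c4 c5 c6 c7 c8 c9 (fun {x A Ψ} => @c10 x A Ψ) c11 c12 c13 c14 c15 c16 c17 (fun {Φ} => @c18 Φ) c19 (fun {Φ} => @c20 Φ) c21 h
    · exact fun {Γ N B} h => IsTm.rec (motive_1 := fun Γ _ => Tele.scoped Γ)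
        (motive_2 := fun Γ A _ => A.fv ⊆ Γ.hd)
        (motive_3 := fun Γ A₀ A₁ _ => A₀.fv ⊆ Γ.hd ∧ A₁.fv ⊆ Γ.hd)
        (motive_4 := fun Γ N B _ => N.fv ⊆ Γ.hd)
        (motive_5 := fun Γ N₀ N₁ B _ => N₀.fv ⊆ Γ.hd ∧ N₁.fv ⊆ Γ.hd)
        (motive_6 := fun Γ φ Ξ _ => φ.fv ⊆ Γ.hd)
        (motive_7 := fun Γ φ₀ φ₁ Θ _ => φ₀.fv ⊆ Γ.hd ∧ φ₁.fv ⊆ Γ.hd)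
        c1 c2 c3 c4 c5 c6 c7 c8 c9 (fun {x A Ψ} => @c10 x A Ψ) c11 c12 c13 c14 c15 c16 c17 (fun {Φ} => @c18 Φ) c19 (fun {Φ} => @c20 Φ) c21 h
    · exact fun {Γ N₀ N₁ B} h => EqTm.rec (motive_1 := fun Γ _ => Tele.scoped Γ)
        (motive_2 := fun Γ A _ => A.fv ⊆ Γ.hd)
        (motive_3 := fun Γ A₀ A₁ _ => A₀.fv ⊆ Γ.hd ∧ A₁.fv ⊆ Γ.hd)
        (motive_4 := fun Γ N B _ => N.fv ⊆ Γ.hd)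
        (motive_5 := fun Γ N₀ N₁ B _ => N₀.fv ⊆ Γ.hd ∧ N₁.fv ⊆ Γ.hd)
        (motive_6 := fun Γ φ Ξ _ => φ.fv ⊆ Γ.hd)
        (motive_7 := fun Γ φ₀ φ₁ Θ _ => φ₀.fv ⊆ Γ.hd ∧ φ₁.fv ⊆ Γ.hd)
        c1 c2 c3 c4 c5 c6 c7 c8 c9 (fun {x A Ψ} => @c10 x A Ψ) c11 c12 c13 c14 c15 c16 c17 (fun {Φ} => @c18 Φ) c19 (fun {Φ} => @c20 Φ) c21 h
    · exact fun {Γ φ Ξ} h => IsSubst.rec (motive_1 := fun Γ _ => Tele.scoped Γ)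
        (motive_2 := fun Γ A _ => A.fv ⊆ Γ.hd)
        (motive_3 := fun Γ A₀ A₁ _ => A₀.fv ⊆ Γ.hd ∧ A₁.fv ⊆ Γ.hd)
        (motive_4 := fun Γ N B _ => N.fv ⊆ Γ.hd)
        (motive_5 := fun Γ N₀ N₁ B _ => N₀.fv ⊆ Γ.hd ∧ N₁.fv ⊆ Γ.hd)
        (motive_6 := fun Γ φ Ξ _ => φ.fv ⊆ Γ.hd)
        (motive_7 := fun Γ φ₀ φ₁ Θ _ => φ₀.fv ⊆ Γ.hd ∧ φ₁.fv ⊆ Γ.hd)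
        c1 c2 c3 c4 c5 c6 c7 c8 c9 (fun {x A Ψ} => @c10 x A Ψ) c11 c12 c13 c14 c15 c16 c17 (fun {Φ} => @c18 Φ) c19 (fun {Φ} => @c20 Φ) c21 h
    · exact fun {Γ φ₀ φ₁ Θ} h => EqSubst.rec (motive_1 := fun Γ _ => Tele.scoped Γ)
        (motive_2 := fun Γ A _ => A.fv ⊆ Γ.hd)
        (motive_3 := fun Γ A₀ A₁ _ => A₀.fv ⊆ Γ.hd ∧ A₁.fv ⊆ Γ.hd)
        (motive_4 := fun Γ N B _ => N.fv ⊆ Γ.hd)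
        (motive_5 := fun Γ N₀ N₁ B _ => N₀.fv ⊆ Γ.hd ∧ N₁.fv ⊆ Γ.hd)
        (motive_6 := fun Γ φ Ξ _ => φ.fv ⊆ Γ.hd)
        (motive_7 := fun Γ φ₀ φ₁ Θ _ => φ₀.fv ⊆ Γ.hd ∧ φ₁.fv ⊆ Γ.hd)
        c1 c2 c3 c4 c5 c6 c7 c8 c9 (fun {x A Ψ} => @c10 x A Ψ) c11 c12 c13 c14 c15 c16 c17 (fun {Φ} => @c18 Φ) c19 (fun {Φ} => @c20 Φ) c21 h

theorem fpack {T : Thy} (hT : IsThy T) : FPack T :=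
  fpack_aux (T.length + 1) T (by omega) hT

end FSuite
section GSuite

/-! ### The wall suite: if the head variable's sort has free variables
    ("locked"), the head variable is essentially unusable. -/

lemma Srt.fv_subst_closed {A : Srt} {φ : Subst} (h : A.fv = []) :
    (A.subst φ).fv = [] := by
  rw [List.eq_nil_iff_forall_not_mem]
  intro z hz
  obtain ⟨y, hy, _⟩ := Srt.fv_subst_mem A φ z hz
  simp [h] at hy

lemma sub_single_eq_nil {l : List ℕ} {h : ℕ} (hs : l ⊆ [h]) (hn : h ∉ l) :
    l = [] := by
  rw [List.eq_nil_iff_forall_not_mem]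
  intro z hz
  have : z = h := by simpa using hs hz
  exact hn (this ▸ hz)

lemma mem_of_ne_nil_sub_single {l : List ℕ} {h : ℕ} (hne : l ≠ [])
    (hs : l ⊆ [h]) : h ∈ l := by
  cases l with
  | nil => exact absurd rfl hne
  | cons a l =>
    have : a = h := by simpa using hs (by simp)
    simp [this]

/-- `SORTC h D B`: under a lock `(h, D)`, `B` is a sort the locked variable
    could inhabit. -/
def SORTC (h : ℕ) (D B : Srt) : Prop := B = D ∨ h ∈ B.fv

structure GPack (T : Thy) : Prop where
  g2 : ∀ {Γ : Tele} {A : Srt}, IsSrt T Γ A → ∀ h D Γ₀, Γ = (h, D) :: Γ₀ →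
        D.fv ≠ [] → h ∉ A.fv
  g3 : ∀ {Γ : Tele} {A₀ A₁ : Srt}, EqSrt T Γ A₀ A₁ → ∀ h D Γ₀,
        Γ = (h, D) :: Γ₀ → D.fv ≠ [] → h ∉ A₀.fv ∧ h ∉ A₁.fv
  g4 : ∀ {Γ : Tele} {N : Tm} {B : Srt}, IsTm T Γ N B → ∀ h D Γ₀,
        Γ = (h, D) :: Γ₀ → D.fv ≠ [] →
        (h ∈ N.fv → SORTC h D B) ∧ (SORTC h D B → N = .var h)
  g5 : ∀ {Γ : Tele} {N₀ N₁ : Tm} {B : Srt}, EqTm T Γ N₀ N₁ B → ∀ h D Γ₀,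
        Γ = (h, D) :: Γ₀ → D.fv ≠ [] → (h ∈ N₀.fv ∨ h ∈ N₁.fv) →
        SORTC h D B ∧ h ∈ N₀.fv ∧ h ∈ N₁.fv
  g6 : ∀ {Γ : Tele} {φ : Subst} {Ξ : Tele}, IsSubst T Γ φ Ξ → ∀ h D Γ₀,
        Γ = (h, D) :: Γ₀ → D.fv ≠ [] → Ξ.scoped → h ∉ φ.fv
  g7 : ∀ {Γ : Tele} {φ₀ φ₁ : Subst} {Θ : Tele}, EqSubst T Γ φ₀ φ₁ Θ →
        ∀ h D Γ₀, Γ = (h, D) :: Γ₀ → D.fv ≠ [] →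
        ∀ y Dy Θ₀ pre₀ pre₁ P₀ P₁, Θ = (y, Dy) :: Θ₀ →
          φ₀ = .snoc pre₀ P₀ y → φ₁ = .snoc pre₁ P₁ y →
          (h ∈ P₀.fv ∨ h ∈ P₁.fv) →
          SORTC h D (Dy.subst pre₀) ∧ h ∈ P₀.fv ∧ h ∈ P₁.fv

private abbrev GM2 (T : Thy) : (Γ : Tele) → (A : Srt) → IsSrt T Γ A → Prop :=
  fun Γ A _ => ∀ h D Γ₀, Γ = (h, D) :: Γ₀ → D.fv ≠ [] → h ∉ A.fv
private abbrev GM3 (T : Thy) : (Γ : Tele) → (A₀ A₁ : Srt) → EqSrt T Γ A₀ A₁ → Prop :=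
  fun Γ A₀ A₁ _ => ∀ h D Γ₀, Γ = (h, D) :: Γ₀ → D.fv ≠ [] →
    h ∉ A₀.fv ∧ h ∉ A₁.fv
private abbrev GM4 (T : Thy) : (Γ : Tele) → (N : Tm) → (B : Srt) → IsTm T Γ N B → Prop :=
  fun Γ N B _ => ∀ h D Γ₀, Γ = (h, D) :: Γ₀ → D.fv ≠ [] →
    (h ∈ N.fv → SORTC h D B) ∧ (SORTC h D B → N = .var h)
private abbrev GM5 (T : Thy) : (Γ : Tele) → (N₀ N₁ : Tm) → (B : Srt) →
    EqTm T Γ N₀ N₁ B → Prop :=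
  fun Γ N₀ N₁ B _ => ∀ h D Γ₀, Γ = (h, D) :: Γ₀ → D.fv ≠ [] →
    (h ∈ N₀.fv ∨ h ∈ N₁.fv) → SORTC h D B ∧ h ∈ N₀.fv ∧ h ∈ N₁.fv
private abbrev GM6 (T : Thy) : (Γ : Tele) → (φ : Subst) → (Ξ : Tele) →
    IsSubst T Γ φ Ξ → Prop :=
  fun Γ φ Ξ _ => ∀ h D Γ₀, Γ = (h, D) :: Γ₀ → D.fv ≠ [] → Ξ.scoped → h ∉ φ.fv
private abbrev GM7 (T : Thy) : (Γ : Tele) → (φ₀ φ₁ : Subst) → (Θ : Tele) →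
    EqSubst T Γ φ₀ φ₁ Θ → Prop :=
  fun Γ φ₀ φ₁ Θ _ => ∀ h D Γ₀, Γ = (h, D) :: Γ₀ → D.fv ≠ [] →
    ∀ y Dy Θ₀ pre₀ pre₁ P₀ P₁, Θ = (y, Dy) :: Θ₀ →
      φ₀ = .snoc pre₀ P₀ y → φ₁ = .snoc pre₁ P₁ y →
      (h ∈ P₀.fv ∨ h ∈ P₁.fv) →
      SORTC h D (Dy.subst pre₀) ∧ h ∈ P₀.fv ∧ h ∈ P₁.fv

theorem gpack_aux : ∀ (n : ℕ) (T : Thy), T.length < n → IsThy T → GPack T := by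
  intro n
  induction n with
  | zero => intro T h; omega
  | succ n ihn =>
    intro T hlen hT
    have IH : ∀ T' : Thy, T'.length < T.length → IsThy T' → GPack T' :=
      fun T' h' => ihn T' (by omega)
    have FP : FPack T := fpack hT
    -- convenient facts
    have hdcons : ∀ (h : ℕ) (D : Srt) (Γ₀ : Tele), Tele.hd ((h, D) :: Γ₀) = [h] :=
      fun _ _ _ => rfl
    -- c1, c2 : IsTele cases (motive True)
    have c1 : True := trivial
    have c2 : ∀ {Ψ : Tele} {A : Srt} {x : ℕ}, IsTele T Ψ → IsSrt T Ψ A →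
        x ∉ List.map Prod.fst Ψ → True →
        (∀ h D Γ₀, Ψ = (h, D) :: Γ₀ → D.fv ≠ [] → h ∉ A.fv) → True :=
      fun _ _ _ _ _ => trivial
    -- c3 : IsSrt.form
    have c3 : ∀ {ϑ : ℕ} {Φ Ψ : Tele} {φ : Subst}, Entry.sortDecl ϑ Φ ∈ T →
        IsSubst T Ψ φ Φ →
        (∀ h D Γ₀, Ψ = (h, D) :: Γ₀ → D.fv ≠ [] → Φ.scoped → h ∉ φ.fv) →
        (∀ h D Γ₀, Ψ = (h, D) :: Γ₀ → D.fv ≠ [] → h ∉ (Srt.cut ϑ φ).fv) := by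
      intro ϑ Φ Ψ φ hmem a₂ ih6 h D Γ₀ hΓ hlock
      obtain ⟨T', hl, hT', hTele⟩ := hT.sortDecl_wf hmem
      have hsc : Φ.scoped := (fpack hT').f1 hTele
      simpa [Srt.fv] using ih6 h D Γ₀ hΓ hlock hsc
    -- c4..c6 : EqSrt refl/symm/trans
    have c4 : ∀ {Ψ : Tele} {A : Srt}, IsSrt T Ψ A →
        (∀ h D Γ₀, Ψ = (h, D) :: Γ₀ → D.fv ≠ [] → h ∉ A.fv) →
        (∀ h D Γ₀, Ψ = (h, D) :: Γ₀ → D.fv ≠ [] → h ∉ A.fv ∧ h ∉ A.fv) :=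
      fun _ ih h D Γ₀ hΓ hl => ⟨ih h D Γ₀ hΓ hl, ih h D Γ₀ hΓ hl⟩
    have c5 : ∀ {Ψ : Tele} {A₀ A₁ : Srt}, EqSrt T Ψ A₀ A₁ →
        (∀ h D Γ₀, Ψ = (h, D) :: Γ₀ → D.fv ≠ [] → h ∉ A₀.fv ∧ h ∉ A₁.fv) →
        (∀ h D Γ₀, Ψ = (h, D) :: Γ₀ → D.fv ≠ [] → h ∉ A₁.fv ∧ h ∉ A₀.fv) :=
      fun _ ih h D Γ₀ hΓ hl => ⟨(ih h D Γ₀ hΓ hl).2, (ih h D Γ₀ hΓ hl).1⟩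
    have c6 : ∀ {Ψ : Tele} {A₀ A₁ A₂ : Srt}, EqSrt T Ψ A₀ A₁ → EqSrt T Ψ A₁ A₂ →
        (∀ h D Γ₀, Ψ = (h, D) :: Γ₀ → D.fv ≠ [] → h ∉ A₀.fv ∧ h ∉ A₁.fv) →
        (∀ h D Γ₀, Ψ = (h, D) :: Γ₀ → D.fv ≠ [] → h ∉ A₁.fv ∧ h ∉ A₂.fv) →
        (∀ h D Γ₀, Ψ = (h, D) :: Γ₀ → D.fv ≠ [] → h ∉ A₀.fv ∧ h ∉ A₂.fv) :=
      fun _ _ ih1 ih2 h D Γ₀ hΓ hl =>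
        ⟨(ih1 h D Γ₀ hΓ hl).1, (ih2 h D Γ₀ hΓ hl).2⟩
    -- c7 : EqSrt.subst
    have c7 : ∀ {Φ : Tele} {A₀ A₁ : Srt} {Ψ : Tele} {φ₀ φ₁ : Subst},
        (e' : EqSrt T Φ A₀ A₁) → (w : EqSubst T Ψ φ₀ φ₁ Φ) →
        (∀ h D Γ₀, Φ = (h, D) :: Γ₀ → D.fv ≠ [] → h ∉ A₀.fv ∧ h ∉ A₁.fv) →
        (∀ h D Γ₀, Ψ = (h, D) :: Γ₀ → D.fv ≠ [] →
          ∀ y Dy Θ₀ pre₀ pre₁ P₀ P₁, Φ = (y, Dy) :: Θ₀ →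
            φ₀ = .snoc pre₀ P₀ y → φ₁ = .snoc pre₁ P₁ y →
            (h ∈ P₀.fv ∨ h ∈ P₁.fv) →
            SORTC h D (Dy.subst pre₀) ∧ h ∈ P₀.fv ∧ h ∈ P₁.fv) →
        (∀ h D Γ₀, Ψ = (h, D) :: Γ₀ → D.fv ≠ [] →
          h ∉ (A₀.subst φ₀).fv ∧ h ∉ (A₁.subst φ₁).fv) := by
      intro Φ A₀ A₁ Ψ φ₀ φ₁ e' w ih3 ih7 h D Γ₀ hΓ hlock
      have sortc_ne : ∀ {Dy : Srt} {pre : Subst}, SORTC h D (Dy.subst pre) →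
          Dy.fv ≠ [] := by
        intro Dy pre hS hnil
        have hcl : (Dy.subst pre).fv = [] := Srt.fv_subst_closed hnil
        rcases hS with hS | hS
        · rw [hS] at hcl; exact hlock hcl
        · rw [hcl] at hS; simp at hS
      constructor
      · intro hmem
        obtain ⟨y, hyB, hy'⟩ := Srt.fv_subst_mem A₀ φ₀ h hmem
        have hyhd : y ∈ Φ.hd := (FP.f3 e').1 hyB
        cases hΦ : Φ with
        | nil => rw [hΦ] at hyhd; simp [Tele.hd] at hyhd
        | cons p Θ₀ =>
          obtain ⟨y', Dy⟩ := p
          rw [hΦ] at hyhd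
          have hy : y = y' := by simpa [Tele.hd] using hyhd
          subst hy
          rw [hΦ] at w
          cases w with
          | snoc w' comp =>
            rw [Tm.var_subst_head] at hy'
            have := ih7 h D Γ₀ hΓ hlock y _ _ _ _ _ _ (by rw [hΦ]) rfl rfl
              (Or.inl hy')
            obtain ⟨hS, hP₀, hP₁⟩ := this
            have hDy := sortc_ne hS
            have := (ih3 y _ _ (by rw [hΦ]) hDy).1
            exact this hyB
      · intro hmem
        obtain ⟨y, hyB, hy'⟩ := Srt.fv_subst_mem A₁ φ₁ h hmem
        have hyhd : y ∈ Φ.hd := (FP.f3 e').2 hyB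
        cases hΦ : Φ with
        | nil => rw [hΦ] at hyhd; simp [Tele.hd] at hyhd
        | cons p Θ₀ =>
          obtain ⟨y', Dy⟩ := p
          rw [hΦ] at hyhd
          have hy : y = y' := by simpa [Tele.hd] using hyhd
          subst hy
          rw [hΦ] at w
          cases w with
          | snoc w' comp =>
            rw [Tm.var_subst_head] at hy'
            have := ih7 h D Γ₀ hΓ hlock y _ _ _ _ _ _ (by rw [hΦ]) rfl rfl
              (Or.inr hy')
            obtain ⟨hS, hP₀, hP₁⟩ := this
            have hDy := sortc_ne hS
            have := (ih3 y _ _ (by rw [hΦ]) hDy).2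
            exact this hyB
    -- c8 : EqSrt.ax
    have c8 : ∀ {Ψ : Tele} {A₀ A₁ : Srt}, Entry.sortAx Ψ A₀ A₁ ∈ T →
        (∀ h D Γ₀, Ψ = (h, D) :: Γ₀ → D.fv ≠ [] →
          h ∉ A₀.fv ∧ h ∉ A₁.fv) := by
      intro Ψ A₀ A₁ hmem h D Γ₀ hΓ hl
      obtain ⟨T', hl', hT', _, h0, h1⟩ := hT.sortAx_wf hmem
      exact ⟨(IH T' hl' hT').g2 h0 h D Γ₀ hΓ hl,
             (IH T' hl' hT').g2 h1 h D Γ₀ hΓ hl⟩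
    -- c9 : IsTm.form
    have c9 : ∀ {ϑ : ℕ} {Φ : Tele} {A : Srt} {Ψ : Tele} {φ : Subst},
        Entry.opDecl ϑ Φ A ∈ T → (a₂ : IsSubst T Ψ φ Φ) →
        (∀ h D Γ₀, Ψ = (h, D) :: Γ₀ → D.fv ≠ [] → Φ.scoped → h ∉ φ.fv) →
        (∀ h D Γ₀, Ψ = (h, D) :: Γ₀ → D.fv ≠ [] →
          (h ∈ (Tm.op ϑ φ).fv → SORTC h D (A.subst φ)) ∧
          (SORTC h D (A.subst φ) → Tm.op ϑ φ = .var h)) := by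
      intro ϑ Φ A Ψ φ hmem a₂ ih6 h D Γ₀ hΓ hlock
      obtain ⟨T', hl', hT', hTele, hC⟩ := hT.opDecl_wf hmem
      have hsc : Φ.scoped := (fpack hT').f1 hTele
      have hno : h ∉ φ.fv := ih6 h D Γ₀ hΓ hlock hsc
      have hsub : φ.fv ⊆ [h] := by
        have := FP.f6 a₂; rw [hΓ] at this; simpa [Tele.hd] using this
      have hφnil : φ.fv = [] := sub_single_eq_nil hsub hno
      have hcov : A.fv ⊆ φ.dom := by
        rw [a₂.dom_eq]
        exact List.Subset.trans ((fpack hT').f2 hC) (Tele.hd_subset_names Φ)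
      have hAnil : (A.subst φ).fv = [] := by
        rw [List.eq_nil_iff_forall_not_mem]
        intro z hz
        have := Srt.fv_subst_sub hcov hz
        simp [hφnil] at this
      constructor
      · intro hN
        have : h ∈ φ.fv := by simpa [Tm.fv] using hN
        exact absurd this hno
      · intro hS
        rcases hS with hS | hS
        · rw [hS] at hAnil; exact absurd hAnil hlock
        · rw [hAnil] at hS; simp at hS
    -- c10 : IsTm.var
    have c10 : ∀ {x : ℕ} {A : Srt} {Ψ : List (ℕ × Srt)},
        (∀ h D Γ₀, ((x, A) :: Ψ : Tele) = (h, D) :: Γ₀ → D.fv ≠ [] →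
          (h ∈ (Tm.var x).fv → SORTC h D A) ∧
          (SORTC h D A → Tm.var x = .var h)) := by
      intro x A Ψ h D Γ₀ hΓ hlock
      injection hΓ with he htl
      injection he with hx hA
      subst hx; subst hA
      exact ⟨fun _ => Or.inl rfl, fun _ => rfl⟩
    -- c11 : IsTm.conv
    have c11 : ∀ {Ψ : Tele} {A₀ A₁ : Srt} {M : Tm}, (e : EqSrt T Ψ A₀ A₁) →
        IsTm T Ψ M A₀ →
        (∀ h D Γ₀, Ψ = (h, D) :: Γ₀ → D.fv ≠ [] → h ∉ A₀.fv ∧ h ∉ A₁.fv) →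
        (∀ h D Γ₀, Ψ = (h, D) :: Γ₀ → D.fv ≠ [] →
          (h ∈ M.fv → SORTC h D A₀) ∧ (SORTC h D A₀ → M = .var h)) →
        (∀ h D Γ₀, Ψ = (h, D) :: Γ₀ → D.fv ≠ [] →
          (h ∈ M.fv → SORTC h D A₁) ∧ (SORTC h D A₁ → M = .var h)) := by
      intro Ψ A₀ A₁ M e d ih3 ih4 h D Γ₀ hΓ hlock
      have hhd0 : A₀.fv ⊆ [h] := by
        have := (FP.f3 e).1; rw [hΓ] at this; simpa [Tele.hd] using this
      have hhd1 : A₁.fv ⊆ [h] := by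
        have := (FP.f3 e).2; rw [hΓ] at this; simpa [Tele.hd] using this
      have kill0 : SORTC h D A₀ → False := by
        intro hS
        have hmem : h ∈ A₀.fv := by
          rcases hS with hS | hS
          · subst hS; exact mem_of_ne_nil_sub_single hlock hhd0
          · exact hS
        exact (ih3 h D Γ₀ hΓ hlock).1 hmem
      have kill1 : SORTC h D A₁ → False := by
        intro hS
        have hmem : h ∈ A₁.fv := by
          rcases hS with hS | hS
          · subst hS; exact mem_of_ne_nil_sub_single hlock hhd1
          · exact hS
        exact (ih3 h D Γ₀ hΓ hlock).2 hmem
      exact ⟨fun hN => absurd ((ih4 h D Γ₀ hΓ hlock).1 hN) kill0,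
             fun hS => absurd hS kill1⟩
    -- c12..c15 : EqTm refl/symm/trans/conv
    have c12 : ∀ {Ψ : Tele} {M : Tm} {A : Srt}, IsTm T Ψ M A →
        (∀ h D Γ₀, Ψ = (h, D) :: Γ₀ → D.fv ≠ [] →
          (h ∈ M.fv → SORTC h D A) ∧ (SORTC h D A → M = .var h)) →
        (∀ h D Γ₀, Ψ = (h, D) :: Γ₀ → D.fv ≠ [] → (h ∈ M.fv ∨ h ∈ M.fv) →
          SORTC h D A ∧ h ∈ M.fv ∧ h ∈ M.fv) := by
      intro Ψ M A _ ih h D Γ₀ hΓ hl hyp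
      have hm : h ∈ M.fv := by rcases hyp with hy | hy <;> exact hy
      exact ⟨(ih h D Γ₀ hΓ hl).1 hm, hm, hm⟩
    have c13 : ∀ {Ψ : Tele} {M₀ M₁ : Tm} {A : Srt}, EqTm T Ψ M₀ M₁ A →
        (∀ h D Γ₀, Ψ = (h, D) :: Γ₀ → D.fv ≠ [] → (h ∈ M₀.fv ∨ h ∈ M₁.fv) →
          SORTC h D A ∧ h ∈ M₀.fv ∧ h ∈ M₁.fv) →
        (∀ h D Γ₀, Ψ = (h, D) :: Γ₀ → D.fv ≠ [] → (h ∈ M₁.fv ∨ h ∈ M₀.fv) →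
          SORTC h D A ∧ h ∈ M₁.fv ∧ h ∈ M₀.fv) := by
      intro Ψ M₀ M₁ A _ ih h D Γ₀ hΓ hl hyp
      obtain ⟨hS, h0, h1⟩ := ih h D Γ₀ hΓ hl (hyp.symm)
      exact ⟨hS, h1, h0⟩
    have c14 : ∀ {Ψ : Tele} {M₀ M₁ : Tm} {A : Srt} {M₂ : Tm},
        EqTm T Ψ M₀ M₁ A → EqTm T Ψ M₁ M₂ A →
        (∀ h D Γ₀, Ψ = (h, D) :: Γ₀ → D.fv ≠ [] → (h ∈ M₀.fv ∨ h ∈ M₁.fv) →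
          SORTC h D A ∧ h ∈ M₀.fv ∧ h ∈ M₁.fv) →
        (∀ h D Γ₀, Ψ = (h, D) :: Γ₀ → D.fv ≠ [] → (h ∈ M₁.fv ∨ h ∈ M₂.fv) →
          SORTC h D A ∧ h ∈ M₁.fv ∧ h ∈ M₂.fv) →
        (∀ h D Γ₀, Ψ = (h, D) :: Γ₀ → D.fv ≠ [] → (h ∈ M₀.fv ∨ h ∈ M₂.fv) →
          SORTC h D A ∧ h ∈ M₀.fv ∧ h ∈ M₂.fv) := by
      intro Ψ M₀ M₁ A M₂ _ _ ih1 ih2 h D Γ₀ hΓ hl hyp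
      rcases hyp with hy | hy
      · obtain ⟨hS, h0, h1⟩ := ih1 h D Γ₀ hΓ hl (Or.inl hy)
        obtain ⟨_, _, h2⟩ := ih2 h D Γ₀ hΓ hl (Or.inl h1)
        exact ⟨hS, h0, h2⟩
      · obtain ⟨hS, h1, h2⟩ := ih2 h D Γ₀ hΓ hl (Or.inr hy)
        obtain ⟨_, h0, _⟩ := ih1 h D Γ₀ hΓ hl (Or.inr h1)
        exact ⟨hS, h0, h2⟩
    have c15 : ∀ {Ψ : Tele} {M₀ M₁ : Tm} {A₀ A₁ : Srt}, EqTm T Ψ M₀ M₁ A₀ →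
        (e : EqSrt T Ψ A₀ A₁) →
        (∀ h D Γ₀, Ψ = (h, D) :: Γ₀ → D.fv ≠ [] → (h ∈ M₀.fv ∨ h ∈ M₁.fv) →
          SORTC h D A₀ ∧ h ∈ M₀.fv ∧ h ∈ M₁.fv) →
        (∀ h D Γ₀, Ψ = (h, D) :: Γ₀ → D.fv ≠ [] → h ∉ A₀.fv ∧ h ∉ A₁.fv) →
        (∀ h D Γ₀, Ψ = (h, D) :: Γ₀ → D.fv ≠ [] → (h ∈ M₀.fv ∨ h ∈ M₁.fv) →
          SORTC h D A₁ ∧ h ∈ M₀.fv ∧ h ∈ M₁.fv) := by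
      intro Ψ M₀ M₁ A₀ A₁ _ e ih5 ih3 h D Γ₀ hΓ hl hyp
      obtain ⟨hS, h0, h1⟩ := ih5 h D Γ₀ hΓ hl hyp
      exfalso
      have hhd0 : A₀.fv ⊆ [h] := by
        have := (FP.f3 e).1; rw [hΓ] at this; simpa [Tele.hd] using this
      have hmem : h ∈ A₀.fv := by
        rcases hS with hS | hS
        · subst hS; exact mem_of_ne_nil_sub_single hl hhd0
        · exact hS
      exact (ih3 h D Γ₀ hΓ hl).1 hmem
    -- c16 : EqTm.subst (the crucial case)
    have c16 : ∀ {Φ : Tele} {M₀ M₁ : Tm} {A : Srt} {Ψ : Tele} {φ₀ φ₁ : Subst},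
        (e' : EqTm T Φ M₀ M₁ A) → (w : EqSubst T Ψ φ₀ φ₁ Φ) →
        (∀ h D Γ₀, Φ = (h, D) :: Γ₀ → D.fv ≠ [] → (h ∈ M₀.fv ∨ h ∈ M₁.fv) →
          SORTC h D A ∧ h ∈ M₀.fv ∧ h ∈ M₁.fv) →
        (∀ h D Γ₀, Ψ = (h, D) :: Γ₀ → D.fv ≠ [] →
          ∀ y Dy Θ₀ pre₀ pre₁ P₀ P₁, Φ = (y, Dy) :: Θ₀ →
            φ₀ = .snoc pre₀ P₀ y → φ₁ = .snoc pre₁ P₁ y →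
            (h ∈ P₀.fv ∨ h ∈ P₁.fv) →
            SORTC h D (Dy.subst pre₀) ∧ h ∈ P₀.fv ∧ h ∈ P₁.fv) →
        (∀ h D Γ₀, Ψ = (h, D) :: Γ₀ → D.fv ≠ [] →
          (h ∈ (M₀.subst φ₀).fv ∨ h ∈ (M₁.subst φ₁).fv) →
          SORTC h D (A.subst φ₀) ∧ h ∈ (M₀.subst φ₀).fv ∧
            h ∈ (M₁.subst φ₁).fv) := by
      intro Φ M₀ M₁ A Ψ φ₀ φ₁ e' w ih5 ih7 h D Γ₀ hΓ hlock hyp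
      -- First produce the head decomposition of Φ and the head components.
      have main : ∀ (y' : ℕ) (Dy : Srt) (Θ₀ : Tele), Φ = (y', Dy) :: Θ₀ →
          ∀ pre₀ pre₁ P₀ P₁, φ₀ = .snoc pre₀ P₀ y' → φ₁ = .snoc pre₁ P₁ y' →
          (h ∈ P₀.fv ∧ h ∈ P₁.fv) → (y' ∈ M₀.fv ∨ y' ∈ M₁.fv) →
          SORTC h D (A.subst φ₀) ∧ h ∈ (M₀.subst φ₀).fv ∧
            h ∈ (M₁.subst φ₁).fv := by
        intro y Dy Θ₀ hΦ pre₀ pre₁ P₀ P₁ h0 h1 hPP hyM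
        obtain ⟨hP₀, hP₁⟩ := hPP
        obtain ⟨hSinst, -, -⟩ := ih7 h D Γ₀ hΓ hlock y Dy Θ₀ pre₀ pre₁ P₀ P₁
          hΦ h0 h1 (Or.inl hP₀)
        subst h0; subst h1
        have hDy : Dy.fv ≠ [] := by
          intro hnil
          have hcl : (Dy.subst pre₀).fv = [] := Srt.fv_subst_closed hnil
          rcases hSinst with hS | hS
          · rw [hS] at hcl; exact hlock hcl
          · rw [hcl] at hS; simp at hS
        obtain ⟨hSB, hyM₀, hyM₁⟩ := ih5 y Dy Θ₀ hΦ hDy hyM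
        refine ⟨?_, ?_, ?_⟩
        · -- SORTC h D (A.subst φ₀)
          rcases hSB with hB | hB
          · -- A = Dy
            subst hB
            by_cases hyA : y ∈ A.fv
            · right
              have := Srt.fv_subst_mono A (Subst.snoc pre₀ P₀ y) y hyA
              rw [Tm.var_subst_head] at this
              exact this hP₀
            · rw [Srt.subst_snoc_irrel A pre₀ P₀ y hyA]
              exact hSinst
          · right
            have := Srt.fv_subst_mono A (Subst.snoc pre₀ P₀ y) y hB
            rw [Tm.var_subst_head] at this
            exact this hP₀
        · have := Tm.fv_subst_mono M₀ (Subst.snoc pre₀ P₀ y) y hyM₀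
          rw [Tm.var_subst_head] at this
          exact this hP₀
        · have := Tm.fv_subst_mono M₁ (Subst.snoc pre₁ P₁ y) y hyM₁
          rw [Tm.var_subst_head] at this
          exact this hP₁
      rcases hyp with hy | hy
      · obtain ⟨y, hyM, hy'⟩ := Tm.fv_subst_mem M₀ φ₀ h hy
        have hyhd : y ∈ Φ.hd := (FP.f5 e').1 hyM
        cases hΦ : Φ with
        | nil => rw [hΦ] at hyhd; simp [Tele.hd] at hyhd
        | cons p Θ₀ =>
          obtain ⟨y', Dy⟩ := p
          rw [hΦ] at hyhd
          have hy2 : y = y' := by simpa [Tele.hd] using hyhd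
          subst hy2
          have w2 := w; rw [hΦ] at w2
          cases w2 with
          | @snoc _ ψ₀ ψ₁ _ P₀' P₁' x' A' w' comp =>
            rw [Tm.var_subst_head] at hy'
            obtain ⟨-, hP₀, hP₁⟩ := ih7 h D Γ₀ hΓ hlock y _ _ _ _ _ _ hΦ
              rfl rfl (Or.inl hy')
            exact main y _ _ hΦ _ _ _ _ rfl rfl ⟨hP₀, hP₁⟩ (Or.inl hyM)
      · obtain ⟨y, hyM, hy'⟩ := Tm.fv_subst_mem M₁ φ₁ h hy
        have hyhd : y ∈ Φ.hd := (FP.f5 e').2 hyM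
        cases hΦ : Φ with
        | nil => rw [hΦ] at hyhd; simp [Tele.hd] at hyhd
        | cons p Θ₀ =>
          obtain ⟨y', Dy⟩ := p
          rw [hΦ] at hyhd
          have hy2 : y = y' := by simpa [Tele.hd] using hyhd
          subst hy2
          have w2 := w; rw [hΦ] at w2
          cases w2 with
          | @snoc _ ψ₀ ψ₁ _ P₀' P₁' x' A' w' comp =>
            rw [Tm.var_subst_head] at hy'
            obtain ⟨-, hP₀, hP₁⟩ := ih7 h D Γ₀ hΓ hlock y _ _ _ _ _ _ hΦ
              rfl rfl (Or.inr hy')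
            exact main y _ _ hΦ _ _ _ _ rfl rfl ⟨hP₀, hP₁⟩ (Or.inr hyM)
    -- c17 : EqTm.ax
    have c17 : ∀ {Ψ : Tele} {M₀ M₁ : Tm} {A : Srt}, Entry.termAx Ψ M₀ M₁ A ∈ T →
        (∀ h D Γ₀, Ψ = (h, D) :: Γ₀ → D.fv ≠ [] → (h ∈ M₀.fv ∨ h ∈ M₁.fv) →
          SORTC h D A ∧ h ∈ M₀.fv ∧ h ∈ M₁.fv) := by
      intro Ψ M₀ M₁ A hmem h D Γ₀ hΓ hl hyp
      obtain ⟨T', hl', hT', _, d0, d1⟩ := hT.termAx_wf hmem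
      have G := IH T' hl' hT'
      rcases hyp with hy | hy
      · have hS := (G.g4 d0 h D Γ₀ hΓ hl).1 hy
        have hv := (G.g4 d1 h D Γ₀ hΓ hl).2 hS
        refine ⟨hS, hy, ?_⟩
        rw [hv]; simp [Tm.fv]
      · have hS := (G.g4 d1 h D Γ₀ hΓ hl).1 hy
        have hv := (G.g4 d0 h D Γ₀ hΓ hl).2 hS
        refine ⟨hS, ?_, hy⟩
        rw [hv]; simp [Tm.fv]
    -- c18, c19 : IsSubst nil/snoc
    have c18 : ∀ {Φ : Tele}, (∀ h D Γ₀, Φ = (h, D) :: Γ₀ → D.fv ≠ [] →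
        Tele.scoped ([] : Tele) → h ∉ (Subst.nil).fv) := by
      intro Φ h D Γ₀ _ _ _; simp [Subst.fv]
    have c19 : ∀ {Φ : Tele} {ψ : Subst} {Ψ : Tele} {M : Tm} {x : ℕ} {A : Srt},
        (a₁ : IsSubst T Φ ψ Ψ) → IsTm T Φ M (A.subst ψ) →
        (∀ h D Γ₀, Φ = (h, D) :: Γ₀ → D.fv ≠ [] → Ψ.scoped → h ∉ ψ.fv) →
        (∀ h D Γ₀, Φ = (h, D) :: Γ₀ → D.fv ≠ [] →
          (h ∈ M.fv → SORTC h D (A.subst ψ)) ∧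
          (SORTC h D (A.subst ψ) → M = .var h)) →
        (∀ h D Γ₀, Φ = (h, D) :: Γ₀ → D.fv ≠ [] →
          Tele.scoped ((x, A) :: Ψ) → h ∉ (Subst.snoc ψ M x).fv) := by
      intro Φ ψ Ψ M x A a₁ a₂ ih6 ih4 h D Γ₀ hΓ hlock hsc
      obtain ⟨hAfv, hscΨ⟩ := hsc
      have hψ : h ∉ ψ.fv := ih6 h D Γ₀ hΓ hlock hscΨ
      have hψsub : ψ.fv ⊆ [h] := by
        have := FP.f6 a₁; rw [hΓ] at this; simpa [Tele.hd] using this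
      have hψnil : ψ.fv = [] := sub_single_eq_nil hψsub hψ
      have hcov : A.fv ⊆ ψ.dom := by rw [a₁.dom_eq]; exact hAfv
      have hAnil : (A.subst ψ).fv = [] := by
        rw [List.eq_nil_iff_forall_not_mem]
        intro z hz
        have := Srt.fv_subst_sub hcov hz
        simp [hψnil] at this
      have hM : h ∉ M.fv := by
        intro hm
        rcases (ih4 h D Γ₀ hΓ hlock).1 hm with hS | hS
        · rw [hS] at hAnil; exact hlock hAnil
        · rw [hAnil] at hS; simp at hS
      simp only [Subst.fv, List.mem_append]
      rintro (hc | hc)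
      · exact hψ hc
      · exact hM hc
    -- c20, c21 : EqSubst nil/snoc
    have c20 : ∀ {Φ : Tele}, (∀ h D Γ₀, Φ = (h, D) :: Γ₀ → D.fv ≠ [] →
        ∀ y Dy Θ₀ pre₀ pre₁ P₀ P₁, ([] : Tele) = (y, Dy) :: Θ₀ →
          Subst.nil = .snoc pre₀ P₀ y → Subst.nil = .snoc pre₁ P₁ y →
          (h ∈ P₀.fv ∨ h ∈ P₁.fv) →
          SORTC h D (Dy.subst pre₀) ∧ h ∈ P₀.fv ∧ h ∈ P₁.fv) := by
      intro Φ h D Γ₀ _ _ y Dy Θ₀ pre₀ pre₁ P₀ P₁ hΘ _ _ _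
      exact absurd hΘ (by simp)
    have c21 : ∀ {Φ : Tele} {ψ₀ ψ₁ : Subst} {Ψ : Tele} {M₀ M₁ : Tm} {x : ℕ}
        {A : Srt}, EqSubst T Φ ψ₀ ψ₁ Ψ → EqTm T Φ M₀ M₁ (A.subst ψ₀) →
        (∀ h D Γ₀, Φ = (h, D) :: Γ₀ → D.fv ≠ [] →
          ∀ y Dy Θ₀ pre₀ pre₁ P₀ P₁, Ψ = (y, Dy) :: Θ₀ →
            ψ₀ = .snoc pre₀ P₀ y → ψ₁ = .snoc pre₁ P₁ y →
            (h ∈ P₀.fv ∨ h ∈ P₁.fv) →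
            SORTC h D (Dy.subst pre₀) ∧ h ∈ P₀.fv ∧ h ∈ P₁.fv) →
        (∀ h D Γ₀, Φ = (h, D) :: Γ₀ → D.fv ≠ [] → (h ∈ M₀.fv ∨ h ∈ M₁.fv) →
          SORTC h D (A.subst ψ₀) ∧ h ∈ M₀.fv ∧ h ∈ M₁.fv) →
        (∀ h D Γ₀, Φ = (h, D) :: Γ₀ → D.fv ≠ [] →
          ∀ y Dy Θ₀ pre₀ pre₁ P₀ P₁, ((x, A) :: Ψ : Tele) = (y, Dy) :: Θ₀ →
            Subst.snoc ψ₀ M₀ x = .snoc pre₀ P₀ y →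
            Subst.snoc ψ₁ M₁ x = .snoc pre₁ P₁ y →
            (h ∈ P₀.fv ∨ h ∈ P₁.fv) →
            SORTC h D (Dy.subst pre₀) ∧ h ∈ P₀.fv ∧ h ∈ P₁.fv) := by
      intro Φ ψ₀ ψ₁ Ψ M₀ M₁ x A _ _ _ ih5 h D Γ₀ hΓ hlock
        y Dy Θ₀ pre₀ pre₁ P₀ P₁ hΘ h0 h1 hyp
      injection hΘ with he hΘ'
      injection he with hx hA
      injection h0 with e01 e02 e03
      injection h1 with e11 e12 e13
      subst hx; subst hA; subst hΘ'
      subst e01; subst e02; subst e11; subst e12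
      exact ih5 h D Γ₀ hΓ hlock hyp
    refine ⟨?_, ?_, ?_, ?_, ?_, ?_⟩
    · exact fun {Γ A} hj => IsSrt.rec (motive_1 := fun Γ _ => True)
        (motive_2 := GM2 T) (motive_3 := GM3 T) (motive_4 := GM4 T)
        (motive_5 := GM5 T) (motive_6 := GM6 T) (motive_7 := GM7 T)
        c1 c2 c3 c4 c5 c6 c7 c8 c9 (fun {x A Ψ} => @c10 x A Ψ) c11 c12 c13 c14
        c15 c16 c17 (fun {Φ} => @c18 Φ) c19 (fun {Φ} => @c20 Φ) c21 hj
    · exact fun {Γ A₀ A₁} hj => EqSrt.rec (motive_1 := fun Γ _ => True)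
        (motive_2 := GM2 T) (motive_3 := GM3 T) (motive_4 := GM4 T)
        (motive_5 := GM5 T) (motive_6 := GM6 T) (motive_7 := GM7 T)
        c1 c2 c3 c4 c5 c6 c7 c8 c9 (fun {x A Ψ} => @c10 x A Ψ) c11 c12 c13 c14
        c15 c16 c17 (fun {Φ} => @c18 Φ) c19 (fun {Φ} => @c20 Φ) c21 hj
    · exact fun {Γ N B} hj => IsTm.rec (motive_1 := fun Γ _ => True)
        (motive_2 := GM2 T) (motive_3 := GM3 T) (motive_4 := GM4 T)
        (motive_5 := GM5 T) (motive_6 := GM6 T) (motive_7 := GM7 T)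
        c1 c2 c3 c4 c5 c6 c7 c8 c9 (fun {x A Ψ} => @c10 x A Ψ) c11 c12 c13 c14
        c15 c16 c17 (fun {Φ} => @c18 Φ) c19 (fun {Φ} => @c20 Φ) c21 hj
    · exact fun {Γ N₀ N₁ B} hj => EqTm.rec (motive_1 := fun Γ _ => True)
        (motive_2 := GM2 T) (motive_3 := GM3 T) (motive_4 := GM4 T)
        (motive_5 := GM5 T) (motive_6 := GM6 T) (motive_7 := GM7 T)
        c1 c2 c3 c4 c5 c6 c7 c8 c9 (fun {x A Ψ} => @c10 x A Ψ) c11 c12 c13 c14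
        c15 c16 c17 (fun {Φ} => @c18 Φ) c19 (fun {Φ} => @c20 Φ) c21 hj
    · exact fun {Γ φ Ξ} hj => IsSubst.rec (motive_1 := fun Γ _ => True)
        (motive_2 := GM2 T) (motive_3 := GM3 T) (motive_4 := GM4 T)
        (motive_5 := GM5 T) (motive_6 := GM6 T) (motive_7 := GM7 T)
        c1 c2 c3 c4 c5 c6 c7 c8 c9 (fun {x A Ψ} => @c10 x A Ψ) c11 c12 c13 c14
        c15 c16 c17 (fun {Φ} => @c18 Φ) c19 (fun {Φ} => @c20 Φ) c21 hj
    · exact fun {Γ φ₀ φ₁ Θ} hj => EqSubst.rec (motive_1 := fun Γ _ => True)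
        (motive_2 := GM2 T) (motive_3 := GM3 T) (motive_4 := GM4 T)
        (motive_5 := GM5 T) (motive_6 := GM6 T) (motive_7 := GM7 T)
        c1 c2 c3 c4 c5 c6 c7 c8 c9 (fun {x A Ψ} => @c10 x A Ψ) c11 c12 c13 c14
        c15 c16 c17 (fun {Φ} => @c18 Φ) c19 (fun {Φ} => @c20 Φ) c21 hj

theorem gpack {T : Thy} (hT : IsThy T) : GPack T :=
  gpack_aux (T.length + 1) T (by omega) hT

end GSuite
section MainSuite

/-! ### The main substitution theorem, by guarded mutual induction. -/

theorem subst_main {T : Thy} (hT : IsThy T) :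
    ∀ {Γ : Tele} {A : Srt}, IsSrt T Γ A →
      ∀ Φ ψ, IsSubst T Φ ψ Γ → IsSrt T Φ (A.subst ψ) := by
  have GP : GPack T := gpack hT
  have c1 : True := trivial
  have c2 : ∀ {Ψ : Tele} {A : Srt} {x : ℕ}, IsTele T Ψ → IsSrt T Ψ A →
      x ∉ List.map Prod.fst Ψ → True →
      (∀ Φ ψ, IsSubst T Φ ψ Ψ → IsSrt T Φ (A.subst ψ)) → True :=
    fun _ _ _ _ _ => trivial
  have c3 : ∀ {ϑ : ℕ} {Φ Ψ : Tele} {φ : Subst}, Entry.sortDecl ϑ Φ ∈ T →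
      IsSubst T Ψ φ Φ →
      (Φ.scoped → ∀ Φ' ψ, IsSubst T Φ' ψ Ψ → IsSubst T Φ' (φ.comp ψ) Φ) →
      (∀ Φ' ψ, IsSubst T Φ' ψ Ψ → IsSrt T Φ' ((Srt.cut ϑ φ).subst ψ)) := by
    intro ϑ Ξ Ψ φ hmem a₂ ih6 Φ' ψ hψ
    obtain ⟨T', hl, hT', hTele⟩ := hT.sortDecl_wf hmem
    have hsc : Ξ.scoped := (fpack hT').f1 hTele
    have := ih6 hsc Φ' ψ hψ
    simp only [Srt.subst]
    exact IsSrt.form hmem this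
  have c4 : ∀ {Ψ : Tele} {A : Srt}, IsSrt T Ψ A →
      (∀ Φ ψ, IsSubst T Φ ψ Ψ → IsSrt T Φ (A.subst ψ)) → True :=
    fun _ _ => trivial
  have c5 : ∀ {Ψ : Tele} {A₀ A₁ : Srt}, EqSrt T Ψ A₀ A₁ → True → True :=
    fun _ _ => trivial
  have c6 : ∀ {Ψ : Tele} {A₀ A₁ A₂ : Srt}, EqSrt T Ψ A₀ A₁ → EqSrt T Ψ A₁ A₂ →
      True → True → True := fun _ _ _ _ => trivial
  have c7 : ∀ {Φ : Tele} {A₀ A₁ : Srt} {Ψ : Tele} {φ₀ φ₁ : Subst},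
      EqSrt T Φ A₀ A₁ → EqSubst T Ψ φ₀ φ₁ Φ → True → True → True :=
    fun _ _ _ _ => trivial
  have c8 : ∀ {Ψ : Tele} {A₀ A₁ : Srt}, Entry.sortAx Ψ A₀ A₁ ∈ T → True :=
    fun _ => trivial
  have c9 : ∀ {ϑ : ℕ} {Φ : Tele} {A : Srt} {Ψ : Tele} {φ : Subst},
      Entry.opDecl ϑ Φ A ∈ T → (a₂ : IsSubst T Ψ φ Φ) →
      (Φ.scoped → ∀ Φ' ψ, IsSubst T Φ' ψ Ψ → IsSubst T Φ' (φ.comp ψ) Φ) →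
      (∀ Φ' ψ, IsSubst T Φ' ψ Ψ →
        (∀ x Ax Γ₀, Ψ = (x, Ax) :: Γ₀ → x ∈ Ax.fv → x ∉ (A.subst φ).fv) →
        IsTm T Φ' ((Tm.op ϑ φ).subst ψ) ((A.subst φ).subst ψ)) := by
    intro ϑ Ξ C Ψ φ hmem a₂ ih6 Φ' ψ hψ _
    obtain ⟨T', hl, hT', hTele, hC⟩ := hT.opDecl_wf hmem
    have hsc : Ξ.scoped := (fpack hT').f1 hTele
    have hsub := ih6 hsc Φ' ψ hψ
    have hcov : C.fv ⊆ φ.dom := by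
      rw [a₂.dom_eq]
      exact List.Subset.trans ((fpack hT').f2 hC) (Tele.hd_subset_names Ξ)
    have heq : (C.subst φ).subst ψ = C.subst (φ.comp ψ) :=
      Srt.subst_subst C φ ψ hcov
    rw [heq]
    simp only [Tm.subst]
    exact IsTm.form hmem hsub
  have c10 : ∀ {x : ℕ} {A : Srt} {Ψ : List (ℕ × Srt)},
      (∀ Φ' ψ, IsSubst T Φ' ψ ((x, A) :: Ψ) →
        (∀ x' Ax Γ₀, ((x, A) :: Ψ : Tele) = (x', Ax) :: Γ₀ → x' ∈ Ax.fv →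
          x' ∉ A.fv) →
        IsTm T Φ' ((Tm.var x).subst ψ) (A.subst ψ)) := by
    intro x A Ψ Φ' ψ hψ guard
    cases hψ with
    | @snoc _ ψ₀ _ M _ _ h1 h2 =>
      by_cases hx : x ∈ A.fv
      · exact absurd hx (guard x A Ψ rfl hx)
      · rw [Tm.var_subst_head, Srt.subst_snoc_irrel A ψ₀ M x hx]
        exact h2
  have c11 : ∀ {Ψ : Tele} {A₀ A₁ : Srt} {M : Tm}, (e : EqSrt T Ψ A₀ A₁) →
      IsTm T Ψ M A₀ → True →
      (∀ Φ' ψ, IsSubst T Φ' ψ Ψ →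
        (∀ x Ax Γ₀, Ψ = (x, Ax) :: Γ₀ → x ∈ Ax.fv → x ∉ A₀.fv) →
        IsTm T Φ' (M.subst ψ) (A₀.subst ψ)) →
      (∀ Φ' ψ, IsSubst T Φ' ψ Ψ →
        (∀ x Ax Γ₀, Ψ = (x, Ax) :: Γ₀ → x ∈ Ax.fv → x ∉ A₁.fv) →
        IsTm T Φ' (M.subst ψ) (A₁.subst ψ)) := by
    intro Ψ A₀ A₁ M e d _ ih4 Φ' ψ hψ _
    have guard0 : ∀ x Ax Γ₀, Ψ = (x, Ax) :: Γ₀ → x ∈ Ax.fv → x ∉ A₀.fv := by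
      intro x Ax Γ₀ hΓ hx
      exact (GP.g3 e x Ax Γ₀ hΓ (List.ne_nil_of_mem hx)).1
    have hM := ih4 Φ' ψ hψ guard0
    exact IsTm.conv (EqSrt.subst e hψ.toEq) hM
  have c12 : ∀ {Ψ : Tele} {M : Tm} {A : Srt}, IsTm T Ψ M A →
      (∀ Φ' ψ, IsSubst T Φ' ψ Ψ →
        (∀ x Ax Γ₀, Ψ = (x, Ax) :: Γ₀ → x ∈ Ax.fv → x ∉ A.fv) →
        IsTm T Φ' (M.subst ψ) (A.subst ψ)) → True := fun _ _ => trivial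
  have c13 : ∀ {Ψ : Tele} {M₀ M₁ : Tm} {A : Srt}, EqTm T Ψ M₀ M₁ A →
      True → True := fun _ _ => trivial
  have c14 : ∀ {Ψ : Tele} {M₀ M₁ : Tm} {A : Srt} {M₂ : Tm}, EqTm T Ψ M₀ M₁ A →
      EqTm T Ψ M₁ M₂ A → True → True → True := fun _ _ _ _ => trivial
  have c15 : ∀ {Ψ : Tele} {M₀ M₁ : Tm} {A₀ A₁ : Srt}, EqTm T Ψ M₀ M₁ A₀ →
      EqSrt T Ψ A₀ A₁ → True → True → True := fun _ _ _ _ => trivial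
  have c16 : ∀ {Φ : Tele} {M₀ M₁ : Tm} {A : Srt} {Ψ : Tele} {φ₀ φ₁ : Subst},
      EqTm T Φ M₀ M₁ A → EqSubst T Ψ φ₀ φ₁ Φ → True → True → True :=
    fun _ _ _ _ => trivial
  have c17 : ∀ {Ψ : Tele} {M₀ M₁ : Tm} {A : Srt}, Entry.termAx Ψ M₀ M₁ A ∈ T →
      True := fun _ => trivial
  have c18 : ∀ {Φ : Tele},
      (Tele.scoped ([] : Tele) → ∀ Φ' ψ, IsSubst T Φ' ψ Φ →
        IsSubst T Φ' (Subst.nil.comp ψ) []) := by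
    intro Φ _ Φ' ψ _
    simp only [Subst.comp]
    exact IsSubst.nil
  have c19 : ∀ {Φ : Tele} {ψ : Subst} {Ψ : Tele} {M : Tm} {x : ℕ} {A : Srt},
      (a₁ : IsSubst T Φ ψ Ψ) → IsTm T Φ M (A.subst ψ) →
      (Ψ.scoped → ∀ Φ' ψ', IsSubst T Φ' ψ' Φ → IsSubst T Φ' (ψ.comp ψ') Ψ) →
      (∀ Φ' ψ', IsSubst T Φ' ψ' Φ →
        (∀ x' Ax Γ₀, Φ = (x', Ax) :: Γ₀ → x' ∈ Ax.fv → x' ∉ (A.subst ψ).fv) →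
        IsTm T Φ' (M.subst ψ') ((A.subst ψ).subst ψ')) →
      (Tele.scoped ((x, A) :: Ψ) → ∀ Φ' ψ', IsSubst T Φ' ψ' Φ →
        IsSubst T Φ' ((Subst.snoc ψ M x).comp ψ') ((x, A) :: Ψ)) := by
    intro Γ ψpre Ψt M x A a₁ a₂ ih6 ih4 hsc Φ' ψc hψ
    obtain ⟨hAfv, hscΨ⟩ := hsc
    have hcov : A.fv ⊆ ψpre.dom := by rw [a₁.dom_eq]; exact hAfv
    have guard : ∀ x' Ax Γ₀, Γ = (x', Ax) :: Γ₀ → x' ∈ Ax.fv →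
        x' ∉ (A.subst ψpre).fv := by
      intro x' Ax Γ₀ hΓ hx' hmem
      have hpre : x' ∉ ψpre.fv :=
        GP.g6 a₁ x' Ax Γ₀ hΓ (List.ne_nil_of_mem hx') hscΨ
      exact hpre (Srt.fv_subst_sub hcov hmem)
    have hM := ih4 Φ' ψc hψ guard
    rw [Srt.subst_subst A ψpre ψc hcov] at hM
    have hsub := ih6 hscΨ Φ' ψc hψ
    simp only [Subst.comp]
    exact IsSubst.snoc hsub hM
  have c20 : ∀ {Φ : Tele}, True := fun {_} => trivial
  have c21 : ∀ {Φ : Tele} {ψ₀ ψ₁ : Subst} {Ψ : Tele} {M₀ M₁ : Tm} {x : ℕ}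
      {A : Srt}, EqSubst T Φ ψ₀ ψ₁ Ψ → EqTm T Φ M₀ M₁ (A.subst ψ₀) →
      True → True → True := fun _ _ _ _ => trivial
  exact fun {Γ A} hj => IsSrt.rec (motive_1 := fun Γ _ => True)
    (motive_2 := fun Γ A _ => ∀ Φ ψ, IsSubst T Φ ψ Γ → IsSrt T Φ (A.subst ψ))
    (motive_3 := fun _ _ _ _ => True)
    (motive_4 := fun Γ N B _ => ∀ Φ ψ, IsSubst T Φ ψ Γ →
      (∀ x Ax Γ₀, Γ = (x, Ax) :: Γ₀ → x ∈ Ax.fv → x ∉ B.fv) →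
      IsTm T Φ (N.subst ψ) (B.subst ψ))
    (motive_5 := fun _ _ _ _ _ => True)
    (motive_6 := fun Γ φ Ξ _ => Ξ.scoped → ∀ Φ ψ, IsSubst T Φ ψ Γ →
      IsSubst T Φ (φ.comp ψ) Ξ)
    (motive_7 := fun _ _ _ _ _ => True)
    c1 c2 c3 c4 c5 c6 c7 c8 c9 (fun {x A Ψ} => @c10 x A Ψ) c11 c12 c13 c14
    c15 c16 c17 (fun {Φ} => @c18 Φ) c19 (fun {Φ} => @c20 Φ)
    (fun {Φ ψ₀ ψ₁ Ψ M₀ M₁ x A} => @c21 Φ ψ₀ ψ₁ Ψ M₀ M₁ x A) hj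

end MainSuite

/-- Admissible substitution principle for sorts: in a well-formed generalized
algebraic theory `T`, if `Φ ⊢ ψ : Ψ` and `Ψ ⊢ A sort`, then `Φ ⊢ A[ψ] sort`. -/
theorem IsSrt.subst_admissible {T : Thy} (hT : IsThy T) {Φ Ψ : Tele} {ψ : Subst}
    {A : Srt} (hψ : IsSubst T Φ ψ Ψ) (hA : IsSrt T Ψ A) :
    IsSrt T Φ (A.subst ψ) := by
  exact subst_main hT hA Φ ψ hψ
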